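/- Let Γ be a consistent extension of Δ⁰₁-comprehension that proves the existence of a universal Σ⁰₁ formula, and let P and Q be Π¹₂-problems. The following are equivalent: (1) Player 2 has a computable winning strategy for G^Γ(Q → P); (2) Player 2 has a computable winning strategy for Ĝ^Γ(Q → P); (3) there is an n ∈ ω such that Player 2 has a computable strategy for G^Γ(Q → P) that ensures victory in at most n many moves; (4) there is an n ∈ ω such that Player 2 has a computable strategy for Ĝ^Γ(Q → P) that ensures victory in at most n many moves. Furthermore, n witnesses (3) if and only if it witnesses (4). -/

import Mathlib

/-!
A deep embedding of second-order arithmetic (with Henkin/two-sorted first-order semantics),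
Π¹₂-problems, and the reduction games of Hirschfeldt–Jockusch type.

Provability `Proves Γ φ` is rendered as semantic consequence over all (Henkin) models;
by the Gödel completeness theorem for (two-sorted) first-order logic this coincides with
derivability from `Γ`.
-/

namespace SOA

/-- An `L₁`-structure (a structure in the language of first-order arithmetic). -/
structure L1Struc where
  carrier : Type
  zero : carrier
  one : carrier
  add : carrier → carrier → carrier
  mul : carrier → carrier → carrier
  lt : carrier → carrier → Prop

/-- The standard natural numbers as an `L₁`-structure. -/
abbrev stdM : L1Struc where
  carrier := ℕ
  zero := 0
  one := 1
  add := (· + ·)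
  mul := (· * ·)
  lt := (· < ·)

/-- Number terms of `L₁`/`L₂`, with named variables. -/
inductive Term : Type where
  | var : ℕ → Term
  | zero : Term
  | one : Term
  | add : Term → Term → Term
  | mul : Term → Term → Term

def Term.val (M : L1Struc) (v : ℕ → M.carrier) : Term → M.carrier
  | .var i => v i
  | .zero => M.zero
  | .one => M.one
  | .add t s => M.add (t.val M v) (s.val M v)
  | .mul t s => M.mul (t.val M v) (s.val M v)

def Term.fv : Term → Set ℕ
  | .var i => {i}
  | .zero => ∅
  | .one => ∅
  | .add t s => t.fv ∪ s.fv
  | .mul t s => t.fv ∪ s.fv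

/-- Formulas of `L₂`; number variables and set variables are indexed by `ℕ`. -/
inductive Formula : Type where
  | eq : Term → Term → Formula
  | lt : Term → Term → Formula
  | mem : Term → ℕ → Formula
  | not : Formula → Formula
  | and : Formula → Formula → Formula
  | or : Formula → Formula → Formula
  | imp : Formula → Formula → Formula
  | allN : ℕ → Formula → Formula
  | exN : ℕ → Formula → Formula
  | allS : ℕ → Formula → Formula
  | exS : ℕ → Formula → Formula

def Formula.iff (φ ψ : Formula) : Formula := (φ.imp ψ).and (ψ.imp φ)

/-- Tarskian satisfaction; set quantifiers range over the second-order domain `D`. -/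
def Formula.Sat (M : L1Struc) (D : Set (Set M.carrier)) :
    (ℕ → M.carrier) → (ℕ → Set M.carrier) → Formula → Prop
  | v, _, .eq t s => t.val M v = s.val M v
  | v, _, .lt t s => M.lt (t.val M v) (s.val M v)
  | v, V, .mem t X => t.val M v ∈ V X
  | v, V, .not φ => ¬ Formula.Sat M D v V φ
  | v, V, .and φ ψ => Formula.Sat M D v V φ ∧ Formula.Sat M D v V ψ
  | v, V, .or φ ψ => Formula.Sat M D v V φ ∨ Formula.Sat M D v V ψ
  | v, V, .imp φ ψ => Formula.Sat M D v V φ → Formula.Sat M D v V ψ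
  | v, V, .allN x φ => ∀ a : M.carrier, Formula.Sat M D (Function.update v x a) V φ
  | v, V, .exN x φ => ∃ a : M.carrier, Formula.Sat M D (Function.update v x a) V φ
  | v, V, .allS X φ => ∀ A ∈ D, Formula.Sat M D v (Function.update V X A) φ
  | v, V, .exS X φ => ∃ A ∈ D, Formula.Sat M D v (Function.update V X A) φ

/-- Free number variables. -/
def Formula.numFV : Formula → Set ℕ
  | .eq t s => t.fv ∪ s.fv
  | .lt t s => t.fv ∪ s.fv
  | .mem t _ => t.fv
  | .not φ => φ.numFV
  | .and φ ψ => φ.numFV ∪ ψ.numFV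
  | .or φ ψ => φ.numFV ∪ ψ.numFV
  | .imp φ ψ => φ.numFV ∪ ψ.numFV
  | .allN x φ => φ.numFV \ {x}
  | .exN x φ => φ.numFV \ {x}
  | .allS _ φ => φ.numFV
  | .exS _ φ => φ.numFV

/-- Free set variables. -/
def Formula.setFV : Formula → Set ℕ
  | .eq _ _ => ∅
  | .lt _ _ => ∅
  | .mem _ X => {X}
  | .not φ => φ.setFV
  | .and φ ψ => φ.setFV ∪ ψ.setFV
  | .or φ ψ => φ.setFV ∪ ψ.setFV
  | .imp φ ψ => φ.setFV ∪ ψ.setFV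
  | .allN _ φ => φ.setFV
  | .exN _ φ => φ.setFV
  | .allS X φ => φ.setFV \ {X}
  | .exS X φ => φ.setFV \ {X}

/-- Arithmetic formulas: no set quantifiers (set variables may occur free). -/
def Formula.IsArithmetic : Formula → Prop
  | .eq _ _ => True
  | .lt _ _ => True
  | .mem _ _ => True
  | .not φ => φ.IsArithmetic
  | .and φ ψ => φ.IsArithmetic ∧ ψ.IsArithmetic
  | .or φ ψ => φ.IsArithmetic ∧ ψ.IsArithmetic
  | .imp φ ψ => φ.IsArithmetic ∧ ψ.IsArithmetic
  | .allN _ φ => φ.IsArithmetic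
  | .exN _ φ => φ.IsArithmetic
  | .allS _ _ => False
  | .exS _ _ => False

/-- Δ⁰₀ (bounded) formulas. -/
inductive IsDelta0 : Formula → Prop
  | eq (t s : Term) : IsDelta0 (.eq t s)
  | lt (t s : Term) : IsDelta0 (.lt t s)
  | mem (t : Term) (X : ℕ) : IsDelta0 (.mem t X)
  | not {φ} : IsDelta0 φ → IsDelta0 (.not φ)
  | and {φ ψ} : IsDelta0 φ → IsDelta0 ψ → IsDelta0 (.and φ ψ)
  | or {φ ψ} : IsDelta0 φ → IsDelta0 ψ → IsDelta0 (.or φ ψ)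
  | imp {φ ψ} : IsDelta0 φ → IsDelta0 ψ → IsDelta0 (.imp φ ψ)
  | ballLt {φ} (x : ℕ) (t : Term) : x ∉ t.fv → IsDelta0 φ →
      IsDelta0 (.allN x (.imp (.lt (.var x) t) φ))
  | bexLt {φ} (x : ℕ) (t : Term) : x ∉ t.fv → IsDelta0 φ →
      IsDelta0 (.exN x (.and (.lt (.var x) t) φ))

/-- Σ⁰₁ formulas: existential number quantifiers over a Δ⁰₀ matrix. -/
inductive IsSigma01 : Formula → Prop
  | delta0 {φ} : IsDelta0 φ → IsSigma01 φ
  | exN {φ} (x : ℕ) : IsSigma01 φ → IsSigma01 (.exN x φ)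

/-- Π⁰₁ formulas. -/
inductive IsPi01 : Formula → Prop
  | delta0 {φ} : IsDelta0 φ → IsPi01 φ
  | allN {φ} (x : ℕ) : IsPi01 φ → IsPi01 (.allN x φ)

/-- Σ⁰₂ formulas. -/
inductive IsSigma02 : Formula → Prop
  | pi01 {φ} : IsPi01 φ → IsSigma02 φ
  | exN {φ} (x : ℕ) : IsSigma02 φ → IsSigma02 (.exN x φ)

/-- Π¹₁ formulas: universal set quantifiers over an arithmetic matrix. -/
inductive IsPi11 : Formula → Prop
  | arith {φ} : φ.IsArithmetic → IsPi11 φ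
  | allS {φ} (X : ℕ) : IsPi11 φ → IsPi11 (.allS X φ)

/-- Quantifier-free `L₁`-formulas (no set variables, no quantifiers). -/
inductive IsQFL1 : Formula → Prop
  | eq (t s : Term) : IsQFL1 (.eq t s)
  | lt (t s : Term) : IsQFL1 (.lt t s)
  | not {φ} : IsQFL1 φ → IsQFL1 (.not φ)
  | and {φ ψ} : IsQFL1 φ → IsQFL1 ψ → IsQFL1 (.and φ ψ)
  | or {φ ψ} : IsQFL1 φ → IsQFL1 ψ → IsQFL1 (.or φ ψ)
  | imp {φ ψ} : IsQFL1 φ → IsQFL1 ψ → IsQFL1 (.imp φ ψ)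

/-- Existential `L₁`-formulas. -/
inductive IsExistentialL1 : Formula → Prop
  | qf {φ} : IsQFL1 φ → IsExistentialL1 φ
  | exN {φ} (x : ℕ) : IsExistentialL1 φ → IsExistentialL1 (.exN x φ)

def Term.subst (x : ℕ) (t : Term) : Term → Term
  | .var i => if i = x then t else .var i
  | .zero => .zero
  | .one => .one
  | .add a b => .add (Term.subst x t a) (Term.subst x t b)
  | .mul a b => .mul (Term.subst x t a) (Term.subst x t b)

/-- Substitution of the term `t` for the number variable `x` (used only with terms all of
whose variables are `x` itself, where it is capture-free). -/
def Formula.substN (x : ℕ) (t : Term) : Formula → Formula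
  | .eq a b => .eq (Term.subst x t a) (Term.subst x t b)
  | .lt a b => .lt (Term.subst x t a) (Term.subst x t b)
  | .mem a X => .mem (Term.subst x t a) X
  | .not φ => .not (φ.substN x t)
  | .and φ ψ => .and (φ.substN x t) (ψ.substN x t)
  | .or φ ψ => .or (φ.substN x t) (ψ.substN x t)
  | .imp φ ψ => .imp (φ.substN x t) (ψ.substN x t)
  | .allN y φ => if y = x then .allN y φ else .allN y (φ.substN x t)
  | .exN y φ => if y = x then .exN y φ else .exN y (φ.substN x t)
  | .allS X φ => .allS X (φ.substN x t)
  | .exS X φ => .exS X (φ.substN x t)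

/-- `(M,S)` is a model of the theory `Γ` (schemes are read with free variables as
universally quantified parameters). -/
def Models2 (M : L1Struc) (S : Set (Set M.carrier)) (Γ : Set Formula) : Prop :=
  ∀ φ ∈ Γ, ∀ (v : ℕ → M.carrier) (V : ℕ → Set M.carrier), (∀ i, V i ∈ S) → φ.Sat M S v V

/-- `Γ ⊢ φ`, rendered as semantic consequence over all Henkin models (equivalently,
derivability, by the Gödel completeness theorem). -/
def Proves (Γ : Set Formula) (φ : Formula) : Prop :=
  ∀ (M : L1Struc) (S : Set (Set M.carrier)), Models2 M S Γ →
    ∀ (v : ℕ → M.carrier) (V : ℕ → Set M.carrier), (∀ i, V i ∈ S) → φ.Sat M S v V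

/-- `Γ` is consistent (has a model). -/
def SemConsistent (Γ : Set Formula) : Prop :=
  ∃ (M : L1Struc) (S : Set (Set M.carrier)), Models2 M S Γ

/-- The Δ⁰₁-comprehension scheme. -/
def Delta01CA : Set Formula :=
  { F | ∃ (φ₀ φ₁ : Formula) (x X : ℕ), IsSigma01 φ₀ ∧ IsSigma01 φ₁ ∧
      X ∉ φ₀.setFV ∧ X ∉ φ₁.setFV ∧
      F = .imp (.allN x (Formula.iff φ₀ (.not φ₁)))
            (.exS X (.allN x (Formula.iff (.mem (.var x) X) φ₀))) }

/-- The Σ⁰₁-induction scheme. -/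
def ISigma01 : Set Formula :=
  { F | ∃ (φ : Formula) (x : ℕ), IsSigma01 φ ∧
      F = .imp (.and (φ.substN x .zero) (.allN x (.imp φ (φ.substN x (.add (.var x) .one)))))
            (.allN x φ) }

def ax1 : Formula := .not (.eq (.add (.var 0) .one) .zero)
def ax2 : Formula := .imp (.eq (.add (.var 0) .one) (.add (.var 1) .one)) (.eq (.var 0) (.var 1))
def ax3 : Formula := .eq (.add (.var 0) .zero) (.var 0)
def ax4 : Formula := .eq (.add (.var 0) (.add (.var 1) .one)) (.add (.add (.var 0) (.var 1)) .one)
def ax5 : Formula := .eq (.mul (.var 0) .zero) .zero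
def ax6 : Formula := .eq (.mul (.var 0) (.add (.var 1) .one)) (.add (.mul (.var 0) (.var 1)) (.var 0))
def ax7 : Formula := .not (.lt (.var 0) .zero)
def ax8 : Formula :=
  Formula.iff (.lt (.var 0) (.add (.var 1) .one)) (.or (.lt (.var 0) (.var 1)) (.eq (.var 0) (.var 1)))

/-- The basic (PA⁻) axioms of `RCA₀`. -/
def BasicAx : Set Formula := {ax1, ax2, ax3, ax4, ax5, ax6, ax7, ax8}

/-- The theory `RCA₀`. -/
def RCA0 : Set Formula := BasicAx ∪ ISigma01 ∪ Delta01CA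

/-- The Σ⁰₂-bounding scheme `BΣ⁰₂`. -/
def BSigma02 : Set Formula :=
  { F | ∃ (φ : Formula) (n i k b : ℕ), IsSigma02 φ ∧
      n ∉ φ.numFV ∧ b ∉ φ.numFV ∧
      n ≠ i ∧ n ≠ k ∧ n ≠ b ∧ i ≠ k ∧ i ≠ b ∧ k ≠ b ∧
      F = .allN n (.imp (.allN i (.imp (.lt (.var i) (.var n)) (.exN k φ)))
            (.exN b (.allN i (.imp (.lt (.var i) (.var n))
              (.exN k (.and (.or (.lt (.var k) (.var b)) (.eq (.var k) (.var b))) φ)))))) }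

/-- The Π¹₁ sentences true in the standard model `(ℕ, 𝒫(ℕ))`. -/
def TruePi11 : Set Formula :=
  { φ | IsPi11 φ ∧ φ.numFV = ∅ ∧ φ.setFV = ∅ ∧
        φ.Sat stdM Set.univ (fun _ => stdM.zero) (fun _ => (∅ : Set stdM.carrier)) }

/-- `Γ` is an extension of Δ⁰₁-comprehension by Π¹₁ formulas. -/
def ExtByPi11 (Γ : Set Formula) : Prop :=
  Delta01CA ⊆ Γ ∧ ∀ φ ∈ Γ, φ ∈ Delta01CA ∨ IsPi11 φ

/-! ### Π¹₂-problems -/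

/-- A Π¹₂-problem, given by arithmetic formulas `Θ(X)` (set variable `0`) and
`Ψ(X,Y)` (set variables `0`, `1`). -/
structure Pi12Problem where
  theta : Formula
  psi : Formula

def Pi12Problem.WellFormed (P : Pi12Problem) : Prop :=
  P.theta.IsArithmetic ∧ P.psi.IsArithmetic ∧
  P.theta.numFV = ∅ ∧ P.psi.numFV = ∅ ∧
  P.theta.setFV ⊆ {0} ∧ P.psi.setFV ⊆ {0, 1}

/-- `X` is an `M`-instance of `P`. -/
def Pi12Problem.Inst (P : Pi12Problem) (M : L1Struc) (X : Set M.carrier) : Prop :=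
  P.theta.Sat M Set.univ (fun _ => M.zero) (fun _ => X)

/-- `Y` is a solution to the `M`-instance `X` of `P`. -/
def Pi12Problem.Sol (P : Pi12Problem) (M : L1Struc) (X Y : Set M.carrier) : Prop :=
  P.psi.Sat M Set.univ (fun _ => M.zero) (fun i => if i = 0 then X else Y)

/-- The sentence `∀X (Θ(X) → ∃Y Ψ(X,Y))`. -/
def Pi12Problem.toSentence (P : Pi12Problem) : Formula :=
  .allS 0 (.imp P.theta (.exS 1 P.psi))

/-! ### Δ⁰₁-definability, `M[X₀,…,Xₙ]`, consistency with a theory -/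

/-- `X` is Δ⁰₁-definable over `M` with number parameters and set parameters from `Ps`. -/
def Delta1Def (M : L1Struc) (Ps : Set (Set M.carrier)) (X : Set M.carrier) : Prop :=
  ∃ (φ₀ φ₁ : Formula) (x : ℕ) (v : ℕ → M.carrier) (V : ℕ → Set M.carrier),
    IsSigma01 φ₀ ∧ IsSigma01 φ₁ ∧
    (∀ i ∈ φ₀.setFV ∪ φ₁.setFV, V i ∈ Ps) ∧
    (∀ a, φ₀.Sat M Set.univ (Function.update v x a) V ↔
          ¬ φ₁.Sat M Set.univ (Function.update v x a) V) ∧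
    X = {a | φ₀.Sat M Set.univ (Function.update v x a) V}

/-- The second-order part of `M[X₀,…,Xₙ]` for `Ps = {X₀,…,Xₙ}`. -/
def Mcl (M : L1Struc) (Ps : Set (Set M.carrier)) : Set (Set M.carrier) :=
  { X | Delta1Def M Ps X }

def histL (M : L1Struc) (f : ℕ → Set M.carrier) (n : ℕ) : List (Set M.carrier) :=
  (List.range (n+1)).map f

/-- The structure `M[X₀,…,Xₙ]` determined by a history of Player 1 moves. -/
def Board (M : L1Struc) (hist : List (Set M.carrier)) : Set (Set M.carrier) :=
  Mcl M { X | X ∈ hist }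

/-- An `L₂`-structure `(M,S)` is consistent with `Γ`: it is contained in a model of `Γ`
with the same first-order part. -/
def ConsWith (M : L1Struc) (S : Set (Set M.carrier)) (Γ : Set Formula) : Prop :=
  ∃ T, S ⊆ T ∧ Models2 M T Γ

/-- `S` is closed under Δ⁰₁-comprehension (with parameters from `S`). -/
def D01Closed (M : L1Struc) (S : Set (Set M.carrier)) : Prop :=
  ∀ X, Delta1Def M S X → X ∈ S

/-- The join `X ⊕ Y` inside `M`. -/
def joinM (M : L1Struc) (X Y : Set M.carrier) : Set M.carrier :=
  { c | (∃ a ∈ X, c = M.add a a) ∨ (∃ a ∈ Y, c = M.add (M.add a a) M.one) }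

/-- `X₀ ⊕ X₁ ⊕ ⋯ ⊕ Xₙ` (associated to the left). -/
def joinList (M : L1Struc) : List (Set M.carrier) → Set M.carrier
  | [] => ∅
  | X :: rest => rest.foldl (joinM M) X

/-- Numerals in `M`. -/
def numM (M : L1Struc) : ℕ → M.carrier
  | 0 => M.zero
  | n+1 => M.add (numM M n) M.one

/-! ### Reduction games

A run is given by Player 1's moves `f 0, f 1, …` and Player 2's moves `g 0, g 1, …`,
where `g n` is Player 2's reply (a victory flag together with a set) to `f 0, …, f n`.
`C` is the side condition on Player 1's histories (consistency with `Γ` for `G^Γ`,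
membership in `S` for the modified game `Ĝ^Γ`, trivial for the game over `ω`). -/

/-- The run is still alive after Player 1's move at stage `n` (all moves so far legal,
Player 2 has not yet declared victory). -/
def Alive (P Q : Pi12Problem) (M : L1Struc) (C : List (Set M.carrier) → Prop)
    (f : ℕ → Set M.carrier) (g : ℕ → Prop × Set M.carrier) : ℕ → Prop
  | 0 => P.Inst M (f 0) ∧ C (histL M f 0)
  | n+1 => Alive P Q M C f g n ∧ ¬ (g n).1 ∧ (g n).2 ∈ Board M (histL M f n) ∧
      Q.Inst M ((g n).2) ∧ Q.Sol M ((g n).2) (f (n+1)) ∧ C (histL M f (n+1))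

/-- Player 2's move at stage `n` is a legal winning move. -/
def P2WinMove (P : Pi12Problem) (M : L1Struc) (f : ℕ → Set M.carrier)
    (g : ℕ → Prop × Set M.carrier) (n : ℕ) : Prop :=
  (g n).1 ∧ (g n).2 ∈ Board M (histL M f n) ∧ P.Sol M (f 0) ((g n).2)

/-- Player 2's move at stage `n` is a legal continuing move (an instance of `Q`). -/
def P2ContMove (Q : Pi12Problem) (M : L1Struc) (f : ℕ → Set M.carrier)
    (g : ℕ → Prop × Set M.carrier) (n : ℕ) : Prop :=
  ¬ (g n).1 ∧ (g n).2 ∈ Board M (histL M f n) ∧ Q.Inst M ((g n).2)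

/-- Player 2 wins the run `(f,g)`: its moves are always legal while the run is alive, and
the run does not go on forever. -/
def P2WinsRun (P Q : Pi12Problem) (M : L1Struc) (C : List (Set M.carrier) → Prop)
    (f : ℕ → Set M.carrier) (g : ℕ → Prop × Set M.carrier) : Prop :=
  (∀ n, Alive P Q M C f g n → (P2ContMove Q M f g n ∨ P2WinMove P M f g n)) ∧
  ¬ (∀ n, Alive P Q M C f g n)

/-- Player 2 wins the run `(f,g)` within at most `n₀` moves. -/
def P2WinsRunWithin (P Q : Pi12Problem) (M : L1Struc) (C : List (Set M.carrier) → Prop)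
    (f : ℕ → Set M.carrier) (g : ℕ → Prop × Set M.carrier) (n₀ : ℕ) : Prop :=
  (∀ n, Alive P Q M C f g n → (P2ContMove Q M f g n ∨ P2WinMove P M f g n)) ∧
  ¬ Alive P Q M C f g n₀

/-- Side condition for `G^Γ`: each `M[X₀,…,Xₙ]` must be consistent with `Γ`. -/
def CondG (Γ : Set Formula) (M : L1Struc) (hist : List (Set M.carrier)) : Prop :=
  ConsWith M (Board M hist) Γ

/-- Side condition for `Ĝ^Γ`: Player 1's moves must lie in `S`. -/
def CondS (M : L1Struc) (S : Set (Set M.carrier)) (hist : List (Set M.carrier)) : Prop :=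
  ∀ X ∈ hist, X ∈ S

/-- Player 2 has a winning strategy for `G^Γ(Q → P)`. -/
def P2HasWinG (Γ : Set Formula) (P Q : Pi12Problem) : Prop :=
  ∃ σ : (M : L1Struc) → List (Set M.carrier) → Prop × Set M.carrier,
    ∀ M : L1Struc, Countable M.carrier → ∀ f,
      P2WinsRun P Q M (CondG Γ M) f (fun n => σ M (histL M f n))

/-- Player 2 has a winning strategy for `G^Γ(Q → P)` ensuring victory within `n₀` moves. -/
def P2HasWinGWithin (Γ : Set Formula) (P Q : Pi12Problem) (n₀ : ℕ) : Prop :=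
  ∃ σ : (M : L1Struc) → List (Set M.carrier) → Prop × Set M.carrier,
    ∀ M : L1Struc, Countable M.carrier → ∀ f,
      P2WinsRunWithin P Q M (CondG Γ M) f (fun n => σ M (histL M f n)) n₀

/-- Player 2 has a winning strategy for the modified game `Ĝ^Γ(Q → P)`. -/
def P2HasWinHat (Γ : Set Formula) (P Q : Pi12Problem) : Prop :=
  ∃ σ : (M : L1Struc) → Set (Set M.carrier) → List (Set M.carrier) → Prop × Set M.carrier,
    ∀ (M : L1Struc) (S : Set (Set M.carrier)), Countable M.carrier →
      Models2 M S Γ → D01Closed M S → ∀ f,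
        P2WinsRun P Q M (CondS M S) f (fun n => σ M S (histL M f n))

/-- Player 2 has a winning strategy for `Ĝ^Γ(Q → P)` ensuring victory within `n₀` moves. -/
def P2HasWinHatWithin (Γ : Set Formula) (P Q : Pi12Problem) (n₀ : ℕ) : Prop :=
  ∃ σ : (M : L1Struc) → Set (Set M.carrier) → List (Set M.carrier) → Prop × Set M.carrier,
    ∀ (M : L1Struc) (S : Set (Set M.carrier)), Countable M.carrier →
      Models2 M S Γ → D01Closed M S → ∀ f,
        P2WinsRunWithin P Q M (CondS M S) f (fun n => σ M S (histL M f n)) n₀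

/-- A strategy for Player 1 in `G^Γ`. -/
structure P1StratG where
  M : L1Struc
  first : Set M.carrier
  next : List (Prop × Set M.carrier) → Set M.carrier

def P1StratG.play (τ : P1StratG) (g : ℕ → Prop × Set τ.M.carrier) : ℕ → Set τ.M.carrier
  | 0 => τ.first
  | n+1 => τ.next ((List.range (n+1)).map g)

/-- Player 1 wins the run `(f,g)`: the first move is legal, Player 2 never makes a legal
winning move, and Player 1 can always respond legally. -/
def P1WinsRun (P Q : Pi12Problem) (M : L1Struc) (C : List (Set M.carrier) → Prop)
    (f : ℕ → Set M.carrier) (g : ℕ → Prop × Set M.carrier) : Prop :=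
  Alive P Q M C f g 0 ∧
  ∀ n, Alive P Q M C f g n →
    (¬ P2WinMove P M f g n ∧ (P2ContMove Q M f g n → Alive P Q M C f g (n+1)))

/-- Player 1 has a winning strategy for `G^Γ(Q → P)`. -/
def P1HasWinG (Γ : Set Formula) (P Q : Pi12Problem) : Prop :=
  ∃ τ : P1StratG, Countable τ.M.carrier ∧
    ∀ g, P1WinsRun P Q τ.M (CondG Γ τ.M) (τ.play g) g

/-- A strategy for Player 1 in the modified game `Ĝ^Γ` (its first move includes a model `(M,S)`). -/
structure P1StratHat where
  M : L1Struc
  S : Set (Set M.carrier)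
  first : Set M.carrier
  next : List (Prop × Set M.carrier) → Set M.carrier

def P1StratHat.play (τ : P1StratHat) (g : ℕ → Prop × Set τ.M.carrier) : ℕ → Set τ.M.carrier
  | 0 => τ.first
  | n+1 => τ.next ((List.range (n+1)).map g)

/-- Player 1 has a winning strategy for `Ĝ^Γ(Q → P)`. -/
def P1HasWinHat (Γ : Set Formula) (P Q : Pi12Problem) : Prop :=
  ∃ τ : P1StratHat, Countable τ.M.carrier ∧ Models2 τ.M τ.S Γ ∧ D01Closed τ.M τ.S ∧
    ∀ g, P1WinsRun P Q τ.M (CondS τ.M τ.S) (τ.play g) g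

/-! ### Universal Σ⁰₁ formulas and the functionals `Φₑ` -/

/-- Cantor pairing, as a relation in `M`: `e = ⟨i,j⟩` iff `2e = (i+j)² + (i+j) + 2i`. -/
def cantorPairRel (M : L1Struc) (i j e : M.carrier) : Prop :=
  M.add e e = M.add (M.add (M.mul (M.add i j) (M.add i j)) (M.add i j)) (M.add i i)

/-- Satisfaction of `θ(i, n, X)` (number variables `0`, `1`; set variable `0`). -/
def satIdx (θ : Formula) (M : L1Struc) (i n : M.carrier) (X : Set M.carrier) : Prop :=
  θ.Sat M Set.univ (fun m => if m = 0 then i else if m = 1 then n else M.zero) (fun _ => X)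

/-- `Y = Φₑ^X` in `M`, relative to the universal Σ⁰₁ formula `θ`. -/
def IsPhi (θ : Formula) (M : L1Struc) (e : M.carrier) (X Y : Set M.carrier) : Prop :=
  ∃ i j : M.carrier, cantorPairRel M i j e ∧
    (∀ n, satIdx θ M i n X ↔ ¬ satIdx θ M j n X) ∧
    (∀ n, n ∈ Y ↔ satIdx θ M i n X)

def GoodSigma (φ : Formula) : Prop :=
  IsSigma01 φ ∧ φ.numFV ⊆ {0, 1} ∧ φ.setFV ⊆ {0}

/-- `θ` is a universal Σ⁰₁ formula, provably in `Γ`. -/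
def UnivSigma01 (Γ : Set Formula) (θ : Formula) : Prop :=
  GoodSigma θ ∧ ∀ φ, GoodSigma φ →
    ∀ (M : L1Struc) (S : Set (Set M.carrier)), Models2 M S Γ →
      ∀ e : M.carrier, ∃ i : M.carrier, ∀ n : M.carrier, ∀ X ∈ S,
        (satIdx θ M i n X ↔ satIdx φ M e n X)

/-- `θ` is a universal Σ⁰₁ formula over the standard model. -/
def UnivSigma01Std (θ : Formula) : Prop :=
  GoodSigma θ ∧ ∀ φ, GoodSigma φ →
    ∀ e : stdM.carrier, ∃ i : stdM.carrier, ∀ (n : stdM.carrier) (X : Set stdM.carrier),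
      (satIdx θ stdM i n X ↔ satIdx φ stdM e n X)

/-! ### Computable strategies for Player 2 -/

/-- The move prescribed by the computable strategy with index `k` at the given history:
Player 2 plays `Z = Φ_e^{X₀⊕⋯⊕Xₙ}` where `e = Φ_k(n)`; by the coding convention, `Z`
declares victory iff `0 ∈ Z`, with payload `{a : a+1 ∈ Z}`. -/
def CodeMove (θ : Formula) (M : L1Struc) (k : Nat.Partrec.Code)
    (hist : List (Set M.carrier)) (mv : Prop × Set M.carrier) : Prop :=
  ∃ e : ℕ, e ∈ k.eval (hist.length - 1) ∧
    ∃ Z : Set M.carrier, IsPhi θ M (numM M e) (joinList M hist) Z ∧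
      mv = ((M.zero ∈ Z), { a | M.add a M.one ∈ Z })

/-- The computable strategy `k` wins every run of the game over `M` with side condition `C`. -/
def P2CompWinsC (θ : Formula) (k : Nat.Partrec.Code) (P Q : Pi12Problem) (M : L1Struc)
    (C : List (Set M.carrier) → Prop) : Prop :=
  ∀ f g,
    ((∀ n, (∀ m < n, Alive P Q M C f g m → CodeMove θ M k (histL M f m) (g m)) →
        Alive P Q M C f g n → ∃ mv, CodeMove θ M k (histL M f n) mv) ∧
     ((∀ n, Alive P Q M C f g n → CodeMove θ M k (histL M f n) (g n)) →
        P2WinsRun P Q M C f g))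

def P2CompWinsCWithin (θ : Formula) (k : Nat.Partrec.Code) (P Q : Pi12Problem) (M : L1Struc)
    (C : List (Set M.carrier) → Prop) (n₀ : ℕ) : Prop :=
  ∀ f g,
    ((∀ n, (∀ m < n, Alive P Q M C f g m → CodeMove θ M k (histL M f m) (g m)) →
        Alive P Q M C f g n → ∃ mv, CodeMove θ M k (histL M f n) mv) ∧
     ((∀ n, Alive P Q M C f g n → CodeMove θ M k (histL M f n) (g n)) →
        P2WinsRunWithin P Q M C f g n₀))

/-- Player 2 has a computable winning strategy for `G^Γ(Q → P)`. -/
def P2CompWinsG (Γ : Set Formula) (θ : Formula) (P Q : Pi12Problem) : Prop :=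
  ∃ k : Nat.Partrec.Code, ∀ M : L1Struc, Countable M.carrier →
    P2CompWinsC θ k P Q M (CondG Γ M)

def P2CompWinsGWithin (Γ : Set Formula) (θ : Formula) (P Q : Pi12Problem) (n₀ : ℕ) : Prop :=
  ∃ k : Nat.Partrec.Code, ∀ M : L1Struc, Countable M.carrier →
    P2CompWinsCWithin θ k P Q M (CondG Γ M) n₀

/-- Player 2 has a computable winning strategy for `Ĝ^Γ(Q → P)`. -/
def P2CompWinsHat (Γ : Set Formula) (θ : Formula) (P Q : Pi12Problem) : Prop :=
  ∃ k : Nat.Partrec.Code, ∀ (M : L1Struc) (S : Set (Set M.carrier)), Countable M.carrier →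
    Models2 M S Γ → D01Closed M S → P2CompWinsC θ k P Q M (CondS M S)

def P2CompWinsHatWithin (Γ : Set Formula) (θ : Formula) (P Q : Pi12Problem) (n₀ : ℕ) : Prop :=
  ∃ k : Nat.Partrec.Code, ∀ (M : L1Struc) (S : Set (Set M.carrier)), Countable M.carrier →
    Models2 M S Γ → D01Closed M S → P2CompWinsCWithin θ k P Q M (CondS M S) n₀

/-- Player 2 has a computable winning strategy for the game `G(Q → P)` over the standard
natural numbers. -/
def P2CompWinsStd (θ : Formula) (P Q : Pi12Problem) : Prop :=
  ∃ k : Nat.Partrec.Code, P2CompWinsC θ k P Q stdM (fun _ => True)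

def P2CompWinsStdWithin (θ : Formula) (P Q : Pi12Problem) (n₀ : ℕ) : Prop :=
  ∃ k : Nat.Partrec.Code, P2CompWinsCWithin θ k P Q stdM (fun _ => True) n₀

/-- Player 2 has a winning strategy for the game `G(Q → P)` over the standard natural
numbers ensuring victory within `n₀` moves. -/
def P2HasWinStdWithin (P Q : Pi12Problem) (n₀ : ℕ) : Prop :=
  ∃ σ : List (Set stdM.carrier) → Prop × Set stdM.carrier,
    ∀ f, P2WinsRunWithin P Q stdM (fun _ => True) f (fun n => σ (histL stdM f n)) n₀

/-- `P ≤ω^n Q`: Player 2 wins `G(Q → P)` over `ω` in at most `n+1` moves. -/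
def leOmegaN (P Q : Pi12Problem) (n : ℕ) : Prop := P2HasWinStdWithin P Q (n+1)

/-- Weihrauch reducibility over `Γ` (relative to the universal Σ⁰₁ formula `θ`). -/
def WRed (Γ : Set Formula) (θ : Formula) (P Q : Pi12Problem) : Prop :=
  ∃ e i : ℕ, ∀ (M : L1Struc) (S : Set (Set M.carrier)),
    Countable M.carrier → Models2 M S Γ → D01Closed M S →
    ∀ X ∈ S, P.Inst M X →
      ∃ Xh : Set M.carrier, IsPhi θ M (numM M e) X Xh ∧ Q.Inst M Xh ∧
        ∀ Yh ∈ S, Q.Sol M Xh Yh →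
          ∃ Ys : Set M.carrier, IsPhi θ M (numM M i) (joinM M X Yh) Ys ∧ P.Sol M X Ys

/-! ### Runs played according to an arithmetic formula `Λ(X,n,e)` -/

/-- The run `(f,g)` is played by Player 2 according to `Λ`: at each alive stage `n`, Player 2
plays (the coded move of) `Φ_e^{X₀⊕⋯⊕Xₙ}` for some `e ∈ M` with
`M[X₀,…,Xₙ] ⊨ Λ(X₀⊕⋯⊕Xₙ, n, e)`. -/
def AccordsLambda (θ Λ : Formula) (P Q : Pi12Problem) (M : L1Struc)
    (C : List (Set M.carrier) → Prop) (f : ℕ → Set M.carrier)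
    (g : ℕ → Prop × Set M.carrier) : Prop :=
  ∀ n, Alive P Q M C f g n → ∃ (e : M.carrier) (Z : Set M.carrier),
    Λ.Sat M Set.univ (fun m => if m = 0 then numM M n else if m = 1 then e else M.zero)
      (fun _ => joinList M (histL M f n)) ∧
    IsPhi θ M e (joinList M (histL M f n)) Z ∧
    g n = ((M.zero ∈ Z), { a | M.add a M.one ∈ Z })

/-! ### Semantic rendering of the formulas `Θₙ` and `Δₙ` -/

/-- Satisfaction of the matrix `Θₙ`, given `X₀`, the current join `J`, the pairs
`(e_j, Y_j)` and the remaining `X_{j+1}, …`. -/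
def ThetaSat (θ : Formula) (P Q : Pi12Problem) (M : L1Struc) (X0 : Set M.carrier) :
    Set M.carrier → List (M.carrier × Set M.carrier) → List (Set M.carrier) → Prop
  | _, [], _ => True
  | J, [(e, Y)], _ => IsPhi θ M e J Y ∧ P.Sol M X0 Y
  | _, _ :: _ :: _, [] => True
  | J, (e, Y) :: eY' :: eYs, X :: Xs =>
      IsPhi θ M e J Y ∧ (P.Sol M X0 Y ∨ (Q.Inst M Y ∧ (Q.Sol M Y X →
        ThetaSat θ P Q M X0 (joinM M J X) (eY' :: eYs) Xs)))

def DeltaSatFin (θ : Formula) (P Q : Pi12Problem) (M : L1Struc)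
    (Xs : List (Set M.carrier)) (eYs : List (M.carrier × Set M.carrier)) : Prop :=
  match Xs with
  | [] => True
  | X0 :: rest => P.Inst M X0 → ThetaSat θ P Q M X0 X0 eYs rest

def DeltaSatAux (θ : Formula) (P Q : Pi12Problem) (M : L1Struc) (S : Set (Set M.carrier)) :
    ℕ → List (Set M.carrier) → List (M.carrier × Set M.carrier) → Prop
  | 0, Xs, eYs => DeltaSatFin θ P Q M Xs eYs
  | k+1, Xs, eYs => ∀ X ∈ S, ∃ e : M.carrier, ∃ Y ∈ S,
      DeltaSatAux θ P Q M S k (Xs ++ [X]) (eYs ++ [(e, Y)])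

/-- `(M,S) ⊨ Δₙ`, i.e. `∀X₀ ∃e₀,Y₀ ⋯ ∀Xₙ ∃eₙ,Yₙ Θₙ(…)`. -/
def DeltaSat (θ : Formula) (P Q : Pi12Problem) (M : L1Struc) (S : Set (Set M.carrier))
    (n : ℕ) : Prop :=
  DeltaSatAux θ P Q M S (n+1) [] []

/-! ### Concrete Π¹₂-problems -/

/-- The pairing term `π(t,s) = (t+s)·(t+s) + t`. -/
def pairT (t s : Term) : Term := .add (.mul (.add t s) (.add t s)) t

def Term.ofNat : ℕ → Term
  | 0 => .zero
  | n+1 => .add (Term.ofNat n) .one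

def trueF : Formula := .eq .zero .zero

def leF (t s : Term) : Formula := .or (.lt t s) (.eq t s)

/-- "The set variable `s` names an infinite set" (using number variables `a`, `b`). -/
def infiniteF (s a b : ℕ) : Formula :=
  .allN a (.exN b (.and (.lt (.var a) (.var b)) (.mem (.var b) s)))

/-- `LH`: instances are `c : [ℕ]² → 2` with `lim_y c(x,y) = 1` for all `x`
(coded as the set of codes `π(x,y)`, `x<y`, of pairs colored `1`); solutions are
infinite homogeneous sets. -/
def LH : Pi12Problem where
  theta := .allN 0 (.exN 1 (.allN 2 (.imp (.and (.lt (.var 0) (.var 2)) (.lt (.var 1) (.var 2)))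
    (.mem (pairT (.var 0) (.var 2)) 0))))
  psi := .and (infiniteF 1 0 1)
    (.or
      (.allN 0 (.allN 1 (.imp
        (.and (.mem (.var 0) 1) (.and (.mem (.var 1) 1) (.lt (.var 0) (.var 1))))
        (.mem (pairT (.var 0) (.var 1)) 0))))
      (.allN 0 (.allN 1 (.imp
        (.and (.mem (.var 0) 1) (.and (.mem (.var 1) 1) (.lt (.var 0) (.var 1))))
        (.not (.mem (pairT (.var 0) (.var 1)) 0))))))

/-- `Bound*`: an instance is a simultaneous enumeration of a finite family `F₀,…,F_k` of
bounded sets (marker `π(0,k)`; entries `π(i+1, π(n,s))` meaning `n` enters `F_i` at stage `s`);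
a solution is (the singleton of) a common bound. -/
def BoundStar : Pi12Problem where
  theta := .exN 0 (.and (.mem (pairT .zero (.var 0)) 0)
    (.and (.allN 1 (.imp (.mem (pairT .zero (.var 1)) 0) (.eq (.var 1) (.var 0))))
      (.and (.allN 1 (.imp (.mem (.var 1) 0)
          (.or (.exN 2 (.eq (.var 1) (pairT .zero (.var 2))))
               (.exN 2 (.and (leF (.var 2) (.var 0))
                 (.exN 3 (.exN 4 (.eq (.var 1)
                   (pairT (.add (.var 2) .one) (pairT (.var 3) (.var 4)))))))))))
        (.allN 1 (.imp (leF (.var 1) (.var 0))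
          (.exN 2 (.allN 3 (.allN 4 (.imp
            (.mem (pairT (.add (.var 1) .one) (pairT (.var 3) (.var 4))) 0)
            (leF (.var 3) (.var 2)))))))))))
  psi := .exN 0 (.and (.mem (.var 0) 1)
    (.and (.allN 1 (.imp (.mem (.var 1) 1) (.eq (.var 1) (.var 0))))
      (.allN 1 (.allN 2 (.allN 3 (.imp
        (.mem (pairT (.add (.var 1) .one) (pairT (.var 2) (.var 3))) 0)
        (leF (.var 2) (.var 0))))))))

/-- `stBound*`: an instance is an enumeration of a set `X ⊆ ℕ×ℕ` (entries `π(π(n,k),s)`)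
such that `{n : ∃k (n,k) ∈ X}` is bounded and each `{k : (n,k) ∈ X}` is bounded; a solution
is (the singleton of) a bound on `{k : ∃n (n,k) ∈ X}`. -/
def stBoundStar : Pi12Problem where
  theta := .and (.allN 0 (.imp (.mem (.var 0) 0)
        (.exN 1 (.exN 2 (.exN 3 (.eq (.var 0) (pairT (pairT (.var 1) (.var 2)) (.var 3))))))))
    (.and (.exN 0 (.allN 1 (.allN 2 (.allN 3 (.imp
        (.mem (pairT (pairT (.var 1) (.var 2)) (.var 3)) 0) (leF (.var 1) (.var 0)))))))
      (.allN 1 (.exN 0 (.allN 2 (.allN 3 (.imp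
        (.mem (pairT (pairT (.var 1) (.var 2)) (.var 3)) 0) (leF (.var 2) (.var 0))))))))
  psi := .exN 0 (.and (.mem (.var 0) 1)
    (.and (.allN 1 (.imp (.mem (.var 1) 1) (.eq (.var 1) (.var 0))))
      (.allN 1 (.allN 2 (.allN 3 (.imp
        (.mem (pairT (pairT (.var 1) (.var 2)) (.var 3)) 0)
        (leF (.var 2) (.var 0))))))))

/-- `stRT¹_{<∞}`: instances are functions `c : ℕ → ℕ` with bounded range (coded as sets of
codes `π(x, c(x))`); solutions are infinite sets on which `c` is constant. -/
def stRT1inf : Pi12Problem where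
  theta := .and (.allN 0 (.exN 1 (.and (.mem (pairT (.var 0) (.var 1)) 0)
        (.allN 2 (.imp (.mem (pairT (.var 0) (.var 2)) 0) (.eq (.var 2) (.var 1)))))))
    (.exN 1 (.allN 0 (.allN 2 (.imp (.mem (pairT (.var 0) (.var 2)) 0) (leF (.var 2) (.var 1))))))
  psi := .and (infiniteF 1 0 1)
    (.exN 0 (.allN 1 (.imp (.mem (.var 1) 1) (.mem (pairT (.var 1) (.var 0)) 0))))

/-- `C_ℕ`: an instance is an enumeration of the complement of a nonempty set `A`
(entries `π(n,s)` meaning `n` is enumerated out at stage `s`); a solution is (the singleton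
of) an element of `A`. -/
def CN : Pi12Problem where
  theta := .exN 0 (.allN 1 (.not (.mem (pairT (.var 0) (.var 1)) 0)))
  psi := .exN 0 (.and (.mem (.var 0) 1)
    (.and (.allN 1 (.imp (.mem (.var 1) 1) (.eq (.var 1) (.var 0))))
      (.allN 1 (.not (.mem (pairT (.var 0) (.var 1)) 0)))))

/-- The code `π(x_i, π(x_{i+1}, …, x_{i+c-1}))` of the tuple of variables `i, …, i+c-1`. -/
def varsCode : ℕ → ℕ → Term
  | _, 0 => .zero
  | i, 1 => .var i
  | i, c+2 => pairT (.var i) (varsCode (i+1) (c+1))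

/-- `x_i < x_{i+1} < ⋯ < x_{i+c-1}`. -/
def chainLt : ℕ → ℕ → Formula
  | _, 0 => trueF
  | _, 1 => trueF
  | i, c+2 => .and (.lt (.var i) (.var (i+1))) (chainLt (i+1) (c+1))

/-- `x_i ∈ s ∧ ⋯ ∧ x_{i+c-1} ∈ s` (for the set variable `s`). -/
def allMemS (s : ℕ) : ℕ → ℕ → Formula
  | _, 0 => trueF
  | i, c+1 => .and (.mem (.var i) s) (allMemS s (i+1) c)

/-- `∀ x_i ⋯ ∀ x_{i+c-1} φ`. -/
def allNs : ℕ → ℕ → Formula → Formula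
  | _, 0, φ => φ
  | i, c+1, φ => .allN i (allNs (i+1) c φ)

/-- `RTⁿ_k`: instances are colorings `c : [ℕ]ⁿ → k` (coded as sets of codes
`π(⟨x₁,…,xₙ⟩, v)` for `x₁<⋯<xₙ` and `v = c(x₁,…,xₙ) < k`); solutions are infinite
homogeneous sets. -/
def RTn (n k : ℕ) : Pi12Problem where
  theta := allNs 1 n (.imp (chainLt 1 n)
    (.exN 0 (.and (.lt (.var 0) (Term.ofNat k))
      (.and (.mem (pairT (varsCode 1 n) (.var 0)) 0)
        (.allN (n+1) (.imp (.mem (pairT (varsCode 1 n) (.var (n+1))) 0)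
          (.eq (.var (n+1)) (.var 0))))))))
  psi := .and (infiniteF 1 (n+1) (n+2))
    (.exN 0 (.and (.lt (.var 0) (Term.ofNat k))
      (allNs 1 n (.imp (.and (chainLt 1 n) (allMemS 1 1 n))
        (.mem (pairT (varsCode 1 n) (.var 0)) 0)))))

/-- `RTⁿ_{<∞}`: the number of colors is part of the instance (marker `π(0,k)`, entries
`π(1, π(⟨x₁,…,xₙ⟩, v))`). -/
def RTnInf (n : ℕ) : Pi12Problem where
  theta := .exN 0 (.and (.mem (pairT .zero (.var 0)) 0)
    (.and (.allN (n+1) (.imp (.mem (pairT .zero (.var (n+1))) 0) (.eq (.var (n+1)) (.var 0))))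
      (allNs 1 n (.imp (chainLt 1 n)
        (.exN (n+1) (.and (.lt (.var (n+1)) (.var 0))
          (.and (.mem (pairT .one (pairT (varsCode 1 n) (.var (n+1)))) 0)
            (.allN (n+2) (.imp (.mem (pairT .one (pairT (varsCode 1 n) (.var (n+2)))) 0)
              (.eq (.var (n+2)) (.var (n+1))))))))))))
  psi := .and (infiniteF 1 (n+1) (n+2))
    (.exN (n+1) (allNs 1 n (.imp (.and (chainLt 1 n) (allMemS 1 1 n))
      (.mem (pairT .one (pairT (varsCode 1 n) (.var (n+1)))) 0))))

/-! ### Material for Uftring's example (Statement 11) -/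

/-- `G` is (an arithmetization of) a primitive recursive predicate: a Σ⁰₁ formula in the
number variable `0`, `RCA₀`-provably equivalent to a Π⁰₁ formula, whose standard
extension is primitive recursive. -/
def PrimRecPred (G : Formula) : Prop :=
  IsSigma01 G ∧ G.numFV ⊆ {0} ∧ G.setFV = ∅ ∧
  (∃ π : Formula, IsPi01 π ∧ π.numFV ⊆ {0} ∧ π.setFV = ∅ ∧
      Proves RCA0 (Formula.iff G π)) ∧
  (∃ f : ℕ → Bool, Nat.Primrec (fun m => (f m).toNat) ∧
      ∀ m : ℕ, f m = true ↔
        G.Sat stdM Set.univ (fun i => if i = 0 then m else 0) (fun _ => (∅ : Set ℕ)))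

/-- Truth of `G(m)` in the standard model. -/
def satStd1 (G : Formula) (m : ℕ) : Prop :=
  G.Sat stdM Set.univ (fun i => if i = 0 then m else 0) (fun _ => (∅ : Set ℕ))

/-- The problem `P ≡ ∀X ∃Y ∀x G(x)`. -/
def PGprob (G : Formula) : Pi12Problem where
  theta := trueF
  psi := .allN 0 G

/-- The problem `Q ≡ ∀X [X ≠ ∅ → ∃Y G(μX)]`. -/
def QGprob (G : Formula) : Pi12Problem where
  theta := .exN 0 (.mem (.var 0) 0)
  psi := .exN 0 (.and (.mem (.var 0) 0)
    (.and (.allN 1 (.imp (.lt (.var 1) (.var 0)) (.not (.mem (.var 1) 0)))) G))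

/-! ### Material for Statement 13 -/

/-- A model of a sentence (all valuations into `S`). -/
def ModelsSent (M : L1Struc) (S : Set (Set M.carrier)) (φ : Formula) : Prop :=
  ∀ (v : ℕ → M.carrier) (V : ℕ → Set M.carrier), (∀ i, V i ∈ S) → φ.Sat M S v V

/-- The pairing function inside `M`. -/
def pairM (M : L1Struc) (x y : M.carrier) : M.carrier :=
  M.add (M.mul (M.add x y) (M.add x y)) x

/-- `j : ℕ → M` is an embedding of the standard model into `M`. -/
def L1Embed (M : L1Struc) (j : ℕ → M.carrier) : Prop :=
  j 0 = M.zero ∧ j 1 = M.one ∧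
  (∀ a b : ℕ, j (a + b) = M.add (j a) (j b)) ∧
  (∀ a b : ℕ, j (a * b) = M.mul (j a) (j b)) ∧
  (∀ a b : ℕ, a < b ↔ M.lt (j a) (j b)) ∧
  Function.Injective j

/-- `M` and the embedded standard model satisfy the same existential `L₁`-sentences with
parameters from `ℕ`. -/
def OneElementaryOverStd (M : L1Struc) (j : ℕ → M.carrier) : Prop :=
  ∀ φ, IsExistentialL1 φ → ∀ v : ℕ → ℕ,
    (φ.Sat stdM Set.univ v (fun _ => (∅ : Set ℕ)) ↔
     φ.Sat M Set.univ (fun i => j (v i)) (fun _ => (∅ : Set M.carrier)))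

/-- `A` is `M`-finite: Δ⁰₁-definable over `M` (without set parameters) and bounded. -/
def MFinite (M : L1Struc) (A : Set M.carrier) : Prop :=
  A ∈ Mcl M (∅ : Set (Set M.carrier)) ∧ ∃ b, ∀ x ∈ A, M.lt x b

/-- A total coloring (coded as the set `X` of codes of pairs colored `1`) extends the
condition `(m, p)` of the forcing notion `P_M`: it agrees with `p` below `m`, and colors
`(x,y)` with `1` whenever `x < m ≤ y`. -/
def ExtendsCond (M : L1Struc) (m : M.carrier) (p : Set M.carrier) (X : Set M.carrier) : Prop :=
  (∀ x y, M.lt x y → M.lt y m → (pairM M x y ∈ X ↔ pairM M x y ∈ p)) ∧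
  (∀ x y, M.lt x m → ¬ M.lt y m → M.lt x y → pairM M x y ∈ X)

end SOA

namespace SOA

theorem Term.fv_finite : ∀ t : Term, t.fv.Finite
  | .var _ => Set.finite_singleton _
  | .zero => Set.finite_empty
  | .one => Set.finite_empty
  | .add t s => (Term.fv_finite t).union (Term.fv_finite s)
  | .mul t s => (Term.fv_finite t).union (Term.fv_finite s)

theorem Formula.numFV_finite : ∀ φ : Formula, φ.numFV.Finite
  | .eq t s => (Term.fv_finite t).union (Term.fv_finite s)
  | .lt t s => (Term.fv_finite t).union (Term.fv_finite s)
  | .mem t _ => Term.fv_finite t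
  | .not φ => Formula.numFV_finite φ
  | .and φ ψ => (Formula.numFV_finite φ).union (Formula.numFV_finite ψ)
  | .or φ ψ => (Formula.numFV_finite φ).union (Formula.numFV_finite ψ)
  | .imp φ ψ => (Formula.numFV_finite φ).union (Formula.numFV_finite ψ)
  | .allN _ φ => (Formula.numFV_finite φ).diff
  | .exN _ φ => (Formula.numFV_finite φ).diff
  | .allS _ φ => Formula.numFV_finite φ
  | .exS _ φ => Formula.numFV_finite φ

theorem Formula.setFV_finite : ∀ φ : Formula, φ.setFV.Finite
  | .eq _ _ => Set.finite_empty
  | .lt _ _ => Set.finite_empty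
  | .mem _ _ => Set.finite_singleton _
  | .not φ => Formula.setFV_finite φ
  | .and φ ψ => (Formula.setFV_finite φ).union (Formula.setFV_finite ψ)
  | .or φ ψ => (Formula.setFV_finite φ).union (Formula.setFV_finite ψ)
  | .imp φ ψ => (Formula.setFV_finite φ).union (Formula.setFV_finite ψ)
  | .allS _ φ => (Formula.setFV_finite φ).diff
  | .exS _ φ => (Formula.setFV_finite φ).diff
  | .allN _ φ => Formula.setFV_finite φ
  | .exN _ φ => Formula.setFV_finite φ

theorem Term.val_congr {M : L1Struc} {v v' : ℕ → M.carrier} :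
    ∀ {t : Term}, (∀ i ∈ t.fv, v i = v' i) → t.val M v = t.val M v'
  | .var i, h => h i rfl
  | .zero, _ => rfl
  | .one, _ => rfl
  | .add t s, h => by
      simp only [Term.val]
      rw [Term.val_congr (fun i hi => h i (Or.inl hi)),
        Term.val_congr (fun i hi => h i (Or.inr hi))]
  | .mul t s, h => by
      simp only [Term.val]
      rw [Term.val_congr (fun i hi => h i (Or.inl hi)),
        Term.val_congr (fun i hi => h i (Or.inr hi))]

theorem Formula.sat_congr {M : L1Struc} {D : Set (Set M.carrier)} :
    ∀ {φ : Formula} {v v' : ℕ → M.carrier} {V V' : ℕ → Set M.carrier},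
      (∀ i ∈ φ.numFV, v i = v' i) → (∀ i ∈ φ.setFV, V i = V' i) →
      (Formula.Sat M D v V φ ↔ Formula.Sat M D v' V' φ) := by
  intro φ
  induction φ with
  | eq t s =>
    intro v v' V V' hv _
    simp only [Formula.Sat]
    rw [Term.val_congr (fun i hi => hv i (Or.inl hi)),
      Term.val_congr (fun i hi => hv i (Or.inr hi))]
  | lt t s =>
    intro v v' V V' hv _
    simp only [Formula.Sat]
    rw [Term.val_congr (fun i hi => hv i (Or.inl hi)),
      Term.val_congr (fun i hi => hv i (Or.inr hi))]
  | mem t X =>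
    intro v v' V V' hv hV
    simp only [Formula.Sat]
    rw [Term.val_congr (fun i hi => hv i hi), hV X rfl]
  | not φ ih =>
    intro v v' V V' hv hV
    simp only [Formula.Sat]
    rw [ih hv hV]
  | and φ ψ ihφ ihψ =>
    intro v v' V V' hv hV
    simp only [Formula.Sat]
    rw [ihφ (fun i hi => hv i (Or.inl hi)) (fun i hi => hV i (Or.inl hi)),
      ihψ (fun i hi => hv i (Or.inr hi)) (fun i hi => hV i (Or.inr hi))]
  | or φ ψ ihφ ihψ =>
    intro v v' V V' hv hV
    simp only [Formula.Sat]
    rw [ihφ (fun i hi => hv i (Or.inl hi)) (fun i hi => hV i (Or.inl hi)),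
      ihψ (fun i hi => hv i (Or.inr hi)) (fun i hi => hV i (Or.inr hi))]
  | imp φ ψ ihφ ihψ =>
    intro v v' V V' hv hV
    simp only [Formula.Sat]
    rw [ihφ (fun i hi => hv i (Or.inl hi)) (fun i hi => hV i (Or.inl hi)),
      ihψ (fun i hi => hv i (Or.inr hi)) (fun i hi => hV i (Or.inr hi))]
  | allN x φ ih =>
    intro v v' V V' hv hV
    simp only [Formula.Sat]
    refine forall_congr' fun a => ih (fun i hi => ?_) hV
    rcases eq_or_ne i x with rfl | hne
    · simp [Function.update]
    · simp only [Function.update_of_ne hne]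
      exact hv i ⟨hi, hne⟩
  | exN x φ ih =>
    intro v v' V V' hv hV
    simp only [Formula.Sat]
    refine exists_congr fun a => ih (fun i hi => ?_) hV
    rcases eq_or_ne i x with rfl | hne
    · simp [Function.update]
    · simp only [Function.update_of_ne hne]
      exact hv i ⟨hi, hne⟩
  | allS X φ ih =>
    intro v v' V V' hv hV
    simp only [Formula.Sat]
    refine forall₂_congr fun A _ => ih hv (fun i hi => ?_)
    rcases eq_or_ne i X with rfl | hne
    · simp [Function.update]
    · simp only [Function.update_of_ne hne]
      exact hV i ⟨hi, hne⟩
  | exS X φ ih =>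
    intro v v' V V' hv hV
    simp only [Formula.Sat]
    refine exists_congr fun A => and_congr_right fun _ => ih hv (fun i hi => ?_)
    rcases eq_or_ne i X with rfl | hne
    · simp [Function.update]
    · simp only [Function.update_of_ne hne]
      exact hV i ⟨hi, hne⟩

theorem Formula.sat_arith {M : L1Struc} {D D' : Set (Set M.carrier)} :
    ∀ {φ : Formula}, φ.IsArithmetic → ∀ {v : ℕ → M.carrier} {V : ℕ → Set M.carrier},
      (Formula.Sat M D v V φ ↔ Formula.Sat M D' v V φ) := by
  intro φ
  induction φ with
  | eq t s => intro _ v V; exact Iff.rfl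
  | lt t s => intro _ v V; exact Iff.rfl
  | mem t X => intro _ v V; exact Iff.rfl
  | not φ ih => intro h v V; simp only [Formula.Sat]; rw [ih h]
  | and φ ψ ihφ ihψ => intro h v V; simp only [Formula.Sat]; rw [ihφ h.1, ihψ h.2]
  | or φ ψ ihφ ihψ => intro h v V; simp only [Formula.Sat]; rw [ihφ h.1, ihψ h.2]
  | imp φ ψ ihφ ihψ => intro h v V; simp only [Formula.Sat]; rw [ihφ h.1, ihψ h.2]
  | allN x φ ih => intro h v V; simp only [Formula.Sat]; exact forall_congr' fun a => ih h
  | exN x φ ih => intro h v V; simp only [Formula.Sat]; exact exists_congr fun a => ih h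
  | allS X φ ih => intro h; exact h.elim
  | exS X φ ih => intro h; exact h.elim

theorem IsDelta0.arith : ∀ {φ : Formula}, IsDelta0 φ → φ.IsArithmetic := by
  intro φ h
  induction h with
  | eq t s => trivial
  | lt t s => trivial
  | mem t X => trivial
  | not _ ih => exact ih
  | and _ _ ih1 ih2 => exact ⟨ih1, ih2⟩
  | or _ _ ih1 ih2 => exact ⟨ih1, ih2⟩
  | imp _ _ ih1 ih2 => exact ⟨ih1, ih2⟩
  | ballLt x t _ _ ih => exact ⟨trivial, ih⟩
  | bexLt x t _ _ ih => exact ⟨trivial, ih⟩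

theorem IsSigma01.arith : ∀ {φ : Formula}, IsSigma01 φ → φ.IsArithmetic := by
  intro φ h
  induction h with
  | delta0 h => exact h.arith
  | exN x _ ih => exact ih

open Classical in
theorem Delta1Def.mono {M : L1Struc} {Ps Ps' : Set (Set M.carrier)} {X : Set M.carrier}
    (h : Delta1Def M Ps X) (hsub : Ps ⊆ Ps') : Delta1Def M Ps' X := by
  obtain ⟨φ₀, φ₁, x, v, V, h0, h1, hV, hc, hX⟩ := h
  exact ⟨φ₀, φ₁, x, v, V, h0, h1, fun i hi => hsub (hV i hi), hc, hX⟩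

theorem mem_board_self {M : L1Struc} {hist : List (Set M.carrier)} {X : Set M.carrier}
    (hX : X ∈ hist) : X ∈ Board M hist := by
  refine ⟨.mem (.var 0) 0, .not (.mem (.var 0) 0), 0, fun _ => M.zero, fun _ => X,
    .delta0 (.mem _ _), .delta0 (.not (.mem _ _)), ?_, ?_, ?_⟩
  · intro i hi
    have : i = 0 := by
      simpa [Formula.setFV, Term.fv] using hi
    subst this; exact hX
  · intro a
    simp [Formula.Sat, Term.val]
  · ext a
    simp [Formula.Sat, Term.val]

theorem board_subset {M : L1Struc} {S : Set (Set M.carrier)} {hist : List (Set M.carrier)}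
    (hcl : D01Closed M S) (hh : ∀ X ∈ hist, X ∈ S) : Board M hist ⊆ S := by
  intro X hX
  exact hcl X (Delta1Def.mono hX (fun Y hY => hh Y hY))

theorem comprehension_mem {M : L1Struc} {S : Set (Set M.carrier)} {Γ : Set Formula}
    (hmod : Models2 M S Γ) (hΓ : Delta01CA ⊆ Γ)
    {φ₀ φ₁ : Formula} (h0 : IsSigma01 φ₀) (h1 : IsSigma01 φ₁) (x : ℕ)
    (v : ℕ → M.carrier) (V : ℕ → Set M.carrier) (hV : ∀ i, V i ∈ S)
    (hcompl : ∀ a, Formula.Sat M S (Function.update v x a) V φ₀ ↔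
      ¬ Formula.Sat M S (Function.update v x a) V φ₁) :
    {a | Formula.Sat M S (Function.update v x a) V φ₀} ∈ S := by
  have hfin : (φ₀.setFV ∪ φ₁.setFV).Finite :=
    (Formula.setFV_finite φ₀).union (Formula.setFV_finite φ₁)
  obtain ⟨X, hX⟩ : ∃ X, X ∉ φ₀.setFV ∪ φ₁.setFV := hfin.infinite_compl.nonempty
  have hF : Formula.imp (.allN x (Formula.iff φ₀ (.not φ₁)))
      (.exS X (.allN x (Formula.iff (.mem (.var x) X) φ₀))) ∈ Γ := by
    refine hΓ ⟨φ₀, φ₁, x, X, h0, h1, fun h => hX (Or.inl h), fun h => hX (Or.inr h), rfl⟩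
  have hsat := hmod _ hF v V hV
  simp only [Formula.Sat, Formula.iff] at hsat
  obtain ⟨A, hA, hAall⟩ := hsat (fun a => ⟨(hcompl a).1, (hcompl a).2⟩)
  have key : ∀ a, a ∈ A ↔ Formula.Sat M S (Function.update v x a) V φ₀ := by
    intro a
    have := hAall a
    have hval : Term.val M (Function.update v x a) (.var x) = a := by
      simp [Term.val]
    have hcongr : Formula.Sat M S (Function.update v x a) (Function.update V X A) φ₀ ↔
        Formula.Sat M S (Function.update v x a) V φ₀ :=
      Formula.sat_congr (fun _ _ => rfl) (fun i hi =>
        Function.update_of_ne (by rintro rfl; exact hX (Or.inl hi)) _ _)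
    simp only [Formula.Sat, hval, Function.update_self] at this
    exact ⟨fun h => hcongr.1 (this.1 h), fun h => this.2 (hcongr.2 h)⟩
  have : A = {a | Formula.Sat M S (Function.update v x a) V φ₀} := Set.ext key
  exact this ▸ hA

theorem empty_mem_of_models {M : L1Struc} {S : Set (Set M.carrier)} {Γ : Set Formula}
    (hmod : Models2 M S Γ) (hΓ : Delta01CA ⊆ Γ) (hne : S.Nonempty) :
    (∅ : Set M.carrier) ∈ S := by
  obtain ⟨A₀, hA₀⟩ := hne
  have := comprehension_mem hmod hΓ (φ₀ := .not (.eq .zero .zero)) (φ₁ := .eq .zero .zero)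
    (.delta0 (.not (.eq _ _))) (.delta0 (.eq _ _)) 0 (fun _ => M.zero) (fun _ => A₀)
    (fun _ => hA₀) (fun a => by simp [Formula.Sat])
  convert this using 1
  ext a
  simp [Formula.Sat, Term.val]

open Classical in
theorem d01closed_of_models {M : L1Struc} {S : Set (Set M.carrier)} {Γ : Set Formula}
    (hmod : Models2 M S Γ) (hΓ : Delta01CA ⊆ Γ) (hne : S.Nonempty) :
    D01Closed M S := by
  intro X hX
  obtain ⟨φ₀, φ₁, x, v, V, h0, h1, hVp, hcompl, hXeq⟩ := hX
  have hSempty : (∅ : Set M.carrier) ∈ S := empty_mem_of_models hmod hΓ hne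
  let V' : ℕ → Set M.carrier := fun i => if i ∈ φ₀.setFV ∪ φ₁.setFV then V i else ∅
  have hV' : ∀ i, V' i ∈ S := by
    intro i
    show (if i ∈ φ₀.setFV ∪ φ₁.setFV then V i else ∅) ∈ S
    by_cases h : i ∈ φ₀.setFV ∪ φ₁.setFV
    · rw [if_pos h]; exact hVp i h
    · rw [if_neg h]; exact hSempty
  have hagree0 : ∀ i ∈ φ₀.setFV, V' i = V i := by
    intro i hi
    show (if i ∈ φ₀.setFV ∪ φ₁.setFV then V i else ∅) = V i
    rw [if_pos (Set.mem_union_left _ hi)]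
  have hagree1 : ∀ i ∈ φ₁.setFV, V' i = V i := by
    intro i hi
    show (if i ∈ φ₀.setFV ∪ φ₁.setFV then V i else ∅) = V i
    rw [if_pos (Set.mem_union_right _ hi)]
  have swap0 : ∀ a, Formula.Sat M S (Function.update v x a) V' φ₀ ↔
      Formula.Sat M Set.univ (Function.update v x a) V φ₀ := fun a =>
    (Formula.sat_congr (fun _ _ => rfl) hagree0).trans (Formula.sat_arith h0.arith)
  have swap1 : ∀ a, Formula.Sat M S (Function.update v x a) V' φ₁ ↔
      Formula.Sat M Set.univ (Function.update v x a) V φ₁ := fun a =>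
    (Formula.sat_congr (fun _ _ => rfl) hagree1).trans (Formula.sat_arith h1.arith)
  have hmem := comprehension_mem hmod hΓ h0 h1 x v V' hV'
    (fun a => by rw [swap0, swap1]; exact hcompl a)
  have hXeq' : X = {a | Formula.Sat M S (Function.update v x a) V' φ₀} := by
    rw [hXeq]; ext a
    exact (swap0 a).symm
  exact hXeq' ▸ hmem

variable {P Q : Pi12Problem} {M : L1Struc} {C C' : List (Set M.carrier) → Prop}
variable {f : ℕ → Set M.carrier} {g g' : ℕ → Prop × Set M.carrier}

theorem mem_histL {n : ℕ} {X : Set M.carrier} :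
    X ∈ histL M f n ↔ ∃ j ≤ n, f j = X := by
  simp [histL, List.mem_map, List.mem_range, Nat.lt_succ_iff]

theorem histL_length {n : ℕ} : (histL M f n).length = n + 1 := by
  simp [histL]

theorem histL_subset {m n : ℕ} (h : m ≤ n) {X : Set M.carrier}
    (hX : X ∈ histL M f m) : X ∈ histL M f n := by
  rw [mem_histL] at hX ⊢
  obtain ⟨j, hj, hjx⟩ := hX
  exact ⟨j, hj.trans h, hjx⟩

theorem histL_ne_nil {n : ℕ} : histL M f n ≠ [] := by
  intro h
  have := histL_length (M := M) (f := f) (n := n)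
  rw [h] at this
  simp at this

theorem joinList_concat {l : List (Set M.carrier)} (hl : l ≠ []) (a : Set M.carrier) :
    joinList M (l ++ [a]) = joinM M (joinList M l) a := by
  cases l with
  | nil => exact absurd rfl hl
  | cons X rest =>
    show joinList M (X :: (rest ++ [a])) = _
    simp only [joinList, List.foldl_append, List.foldl_cons, List.foldl_nil]

theorem histL_succ {n : ℕ} : histL M f (n+1) = histL M f n ++ [f (n+1)] := by
  simp only [histL, List.range_succ, List.map_append, List.map_cons, List.map_nil]

theorem joinList_histL_succ {n : ℕ} :
    joinList M (histL M f (n+1)) = joinM M (joinList M (histL M f n)) (f (n+1)) := by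
  rw [histL_succ, joinList_concat histL_ne_nil]

theorem alive_of_le : ∀ {n : ℕ}, Alive P Q M C f g n → ∀ {m : ℕ}, m ≤ n → Alive P Q M C f g m := by
  intro n
  induction n with
  | zero => intro h m hm; rw [Nat.le_zero.1 hm]; exact h
  | succ n ih =>
    intro h m hm
    rcases eq_or_lt_of_le hm with rfl | h'
    · exact h
    · exact ih h.1 (Nat.lt_succ_iff.1 h')

theorem Alive.cond : ∀ {n : ℕ}, Alive P Q M C f g n → C (histL M f n)
  | 0, h => h.2
  | _+1, h => h.2.2.2.2.2

theorem alive_mono_cond (hC : ∀ h, C h → C' h) :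
    ∀ {n : ℕ}, Alive P Q M C f g n → Alive P Q M C' f g n
  | 0, h => ⟨h.1, hC _ h.2⟩
  | n+1, h => ⟨alive_mono_cond hC h.1, h.2.1, h.2.2.1, h.2.2.2.1, h.2.2.2.2.1,
      hC _ h.2.2.2.2.2⟩

theorem alive_swap_cond :
    ∀ {n : ℕ}, Alive P Q M C f g n → (∀ m ≤ n, C' (histL M f m)) → Alive P Q M C' f g n
  | 0, h, hC' => ⟨h.1, hC' 0 le_rfl⟩
  | n+1, h, hC' => ⟨alive_swap_cond h.1 (fun m hm => hC' m (hm.trans n.le_succ)), h.2.1,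
      h.2.2.1, h.2.2.2.1, h.2.2.2.2.1, hC' (n+1) le_rfl⟩

theorem alive_congr_g :
    ∀ {n : ℕ}, (∀ m < n, g m = g' m) → (Alive P Q M C f g n ↔ Alive P Q M C f g' n)
  | 0, _ => Iff.rfl
  | n+1, hg => by
    show (Alive P Q M C f g n ∧ _) ↔ (Alive P Q M C f g' n ∧ _)
    rw [alive_congr_g (fun m hm => hg m (hm.trans n.lt_succ_self)), hg n n.lt_succ_self]

theorem p2cont_congr (h : g n = g' n) :
    P2ContMove Q M f g n ↔ P2ContMove Q M f g' n := by
  unfold P2ContMove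
  rw [h]

theorem p2win_congr (h : g n = g' n) :
    P2WinMove P M f g n ↔ P2WinMove P M f g' n := by
  unfold P2WinMove
  rw [h]

theorem D01Closed.empty_mem {S : Set (Set M.carrier)} (h : D01Closed M S) :
    (∅ : Set M.carrier) ∈ S := by
  refine h ∅ ⟨.not (.eq .zero .zero), .eq .zero .zero, 0, fun _ => M.zero, fun _ => ∅,
    .delta0 (.not (.eq _ _)), .delta0 (.eq _ _), ?_, ?_, ?_⟩
  · intro i hi
    simp [Formula.setFV] at hi
  · intro a
    simp [Formula.Sat]
  · ext a
    simp [Formula.Sat]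

variable {P Q : Pi12Problem} {M : L1Struc}

open Classical in
/-- Extension of a partial play by code moves (when they exist). -/
noncomputable def extMove (θ : Formula) (M : L1Struc) (code : Nat.Partrec.Code)
    (f : ℕ → Set M.carrier) (t : ℕ) (g₀ : ℕ → Prop × Set M.carrier) (m : ℕ) :
    Prop × Set M.carrier :=
  if m < t then g₀ m
  else if h : ∃ mv, CodeMove θ M code (histL M f m) mv then h.choose else (True, ∅)

theorem extMove_lt {θ code f t g₀} {m : ℕ} (hm : m < t) :
    extMove θ M code f t g₀ m = g₀ m := if_pos hm

theorem ext_codefollow {θ code f t g₀} {C : List (Set M.carrier) → Prop}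
    (hfc : ∀ n, (∀ m < n, Alive P Q M C f (extMove θ M code f t g₀) m →
        CodeMove θ M code (histL M f m) (extMove θ M code f t g₀ m)) →
      Alive P Q M C f (extMove θ M code f t g₀) n →
        ∃ mv, CodeMove θ M code (histL M f n) mv)
    (H0 : ∀ m < t, Alive P Q M C f g₀ m → CodeMove θ M code (histL M f m) (g₀ m)) :
    ∀ n, Alive P Q M C f (extMove θ M code f t g₀) n →
      CodeMove θ M code (histL M f n) (extMove θ M code f t g₀ n) := by
  intro n
  induction n using Nat.strong_induction_on with
  | _ n ih =>
    intro hal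
    by_cases hn : n < t
    · rw [extMove_lt hn]
      refine H0 n hn ?_
      exact (alive_congr_g (fun m hm => extMove_lt (hm.trans hn))).1 hal
    · have hex := hfc n (fun m hm ha => ih m hm ha) hal
      show CodeMove θ M code (histL M f n) (extMove θ M code f t g₀ n)
      unfold extMove
      rw [if_neg hn]
      rw [dif_pos hex]
      exact hex.choose_spec

section soft
variable {Γ : Set Formula} {θ : Formula}

theorem soft_G_to_Hat (hExt : Delta01CA ⊆ Γ) :
    P2CompWinsG Γ θ P Q → P2CompWinsHat Γ θ P Q := by
  rintro ⟨k, hk⟩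
  refine ⟨k, fun M S hcnt hmod hcl => ?_⟩
  intro f g
  have hkM := hk M hcnt
  have himp : ∀ hist, CondS M S hist → CondG Γ M hist :=
    fun hist hh => ⟨S, board_subset hcl hh, hmod⟩
  constructor
  · intro n hprev hal
    have halG : Alive P Q M (CondG Γ M) f g n := alive_mono_cond himp hal
    exact (hkM f g).1 n (fun m hm _ => hprev m hm (alive_of_le hal hm.le)) halG
  · intro hcf
    constructor
    · intro n hal
      set g1 := extMove θ M k f (n+1) g with hg1
      have H0 : ∀ m < n + 1, Alive P Q M (CondG Γ M) f g m →
          CodeMove θ M k (histL M f m) (g m) :=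
        fun m hm _ => hcf m (alive_of_le hal (Nat.lt_succ_iff.1 hm))
      have hcf1 : ∀ m, Alive P Q M (CondG Γ M) f g1 m →
          CodeMove θ M k (histL M f m) (g1 m) :=
        ext_codefollow (fun n' hprev hal' => (hkM f g1).1 n' hprev hal') H0
      have hrun := (hkM f g1).2 hcf1
      have halG : Alive P Q M (CondG Γ M) f g n := alive_mono_cond himp hal
      have halG1 : Alive P Q M (CondG Γ M) f g1 n :=
        (alive_congr_g (fun m hm => (extMove_lt (hm.trans n.lt_succ_self)).symm)).1 halG
      have hleg := hrun.1 n halG1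
      have hgn : g1 n = g n := extMove_lt n.lt_succ_self
      rcases hleg with h | h
      · exact Or.inl ((p2cont_congr hgn).1 h)
      · exact Or.inr ((p2win_congr hgn).1 h)
    · intro hallS
      have hrun := (hkM f g).2 (fun n _ => hcf n (hallS n))
      exact hrun.2 (fun n => alive_mono_cond himp (hallS n))

theorem soft_GW_to_HatW (hExt : Delta01CA ⊆ Γ) {n₀ : ℕ} :
    P2CompWinsGWithin Γ θ P Q n₀ → P2CompWinsHatWithin Γ θ P Q n₀ := by
  rintro ⟨k, hk⟩
  refine ⟨k, fun M S hcnt hmod hcl => ?_⟩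
  intro f g
  have hkM := hk M hcnt
  have himp : ∀ hist, CondS M S hist → CondG Γ M hist :=
    fun hist hh => ⟨S, board_subset hcl hh, hmod⟩
  constructor
  · intro n hprev hal
    have halG : Alive P Q M (CondG Γ M) f g n := alive_mono_cond himp hal
    exact (hkM f g).1 n (fun m hm _ => hprev m hm (alive_of_le hal hm.le)) halG
  · intro hcf
    constructor
    · intro n hal
      set g1 := extMove θ M k f (n+1) g with hg1
      have H0 : ∀ m < n + 1, Alive P Q M (CondG Γ M) f g m →
          CodeMove θ M k (histL M f m) (g m) :=
        fun m hm _ => hcf m (alive_of_le hal (Nat.lt_succ_iff.1 hm))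
      have hcf1 : ∀ m, Alive P Q M (CondG Γ M) f g1 m →
          CodeMove θ M k (histL M f m) (g1 m) :=
        ext_codefollow (fun n' hprev hal' => (hkM f g1).1 n' hprev hal') H0
      have hrun := (hkM f g1).2 hcf1
      have halG : Alive P Q M (CondG Γ M) f g n := alive_mono_cond himp hal
      have halG1 : Alive P Q M (CondG Γ M) f g1 n :=
        (alive_congr_g (fun m hm => (extMove_lt (hm.trans n.lt_succ_self)).symm)).1 halG
      have hleg := hrun.1 n halG1
      have hgn : g1 n = g n := extMove_lt n.lt_succ_self
      rcases hleg with h | h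
      · exact Or.inl ((p2cont_congr hgn).1 h)
      · exact Or.inr ((p2win_congr hgn).1 h)
    · intro halS
      set g1 := extMove θ M k f (n₀+1) g with hg1
      have H0 : ∀ m < n₀ + 1, Alive P Q M (CondG Γ M) f g m →
          CodeMove θ M k (histL M f m) (g m) :=
        fun m hm _ => hcf m (alive_of_le halS (Nat.lt_succ_iff.1 hm))
      have hcf1 : ∀ m, Alive P Q M (CondG Γ M) f g1 m →
          CodeMove θ M k (histL M f m) (g1 m) :=
        ext_codefollow (fun n' hprev hal' => (hkM f g1).1 n' hprev hal') H0
      have hrun := (hkM f g1).2 hcf1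
      have halG : Alive P Q M (CondG Γ M) f g n₀ := alive_mono_cond himp halS
      have halG1 : Alive P Q M (CondG Γ M) f g1 n₀ :=
        (alive_congr_g (fun m hm => (extMove_lt (hm.trans n₀.lt_succ_self)).symm)).1 halG
      exact hrun.2 halG1

theorem soft_HatW_to_GW (hExt : Delta01CA ⊆ Γ) {n₀ : ℕ} :
    P2CompWinsHatWithin Γ θ P Q n₀ → P2CompWinsGWithin Γ θ P Q n₀ := by
  rintro ⟨k, hk⟩
  refine ⟨k, fun M hcnt => ?_⟩
  intro f g
  have getT : ∀ {n : ℕ}, Alive P Q M (CondG Γ M) f g n →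
      ∃ T : Set (Set M.carrier), Models2 M T Γ ∧ D01Closed M T ∧
        (∀ m ≤ n, CondS M T (histL M f m)) := by
    intro n hal
    obtain ⟨T, hT, hmodT⟩ := hal.cond
    have hTne : T.Nonempty :=
      ⟨f 0, hT (mem_board_self (mem_histL.2 ⟨0, Nat.zero_le _, rfl⟩))⟩
    have hclT := d01closed_of_models hmodT hExt hTne
    refine ⟨T, hmodT, hclT, fun m hm X hX => hT (mem_board_self (histL_subset hm hX))⟩
  constructor
  · intro n hprev hal
    obtain ⟨T, hmodT, hclT, hcond⟩ := getT hal
    have himpTS : ∀ hist, CondS M T hist → CondG Γ M hist :=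
      fun hist hh => ⟨T, board_subset hclT hh, hmodT⟩
    have halT : Alive P Q M (CondS M T) f g n := alive_swap_cond hal hcond
    exact (hk M T hcnt hmodT hclT f g).1 n
      (fun m hm halTm => hprev m hm (alive_mono_cond himpTS halTm)) halT
  · intro hcf
    constructor
    · intro n hal
      obtain ⟨T, hmodT, hclT, hcond⟩ := getT hal
      have halT : Alive P Q M (CondS M T) f g n := alive_swap_cond hal hcond
      have himpTS : ∀ hist, CondS M T hist → CondG Γ M hist :=
        fun hist hh => ⟨T, board_subset hclT hh, hmodT⟩
      set g1 := extMove θ M k f (n+1) g with hg1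
      have H0 : ∀ m < n + 1, Alive P Q M (CondS M T) f g m →
          CodeMove θ M k (histL M f m) (g m) :=
        fun m hm _ => hcf m (alive_of_le hal (Nat.lt_succ_iff.1 hm))
      have hkT := hk M T hcnt hmodT hclT
      have hcf1 : ∀ m, Alive P Q M (CondS M T) f g1 m →
          CodeMove θ M k (histL M f m) (g1 m) :=
        ext_codefollow (fun n' hprev hal' => (hkT f g1).1 n' hprev hal') H0
      have hrun := (hkT f g1).2 hcf1
      have halT1 : Alive P Q M (CondS M T) f g1 n :=
        (alive_congr_g (fun m hm => (extMove_lt (hm.trans n.lt_succ_self)).symm)).1 halT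
      have hleg := hrun.1 n halT1
      have hgn : g1 n = g n := extMove_lt n.lt_succ_self
      rcases hleg with h | h
      · exact Or.inl ((p2cont_congr hgn).1 h)
      · exact Or.inr ((p2win_congr hgn).1 h)
    · intro halG
      obtain ⟨T, hmodT, hclT, hcond⟩ := getT halG
      have halT : Alive P Q M (CondS M T) f g n₀ := alive_swap_cond halG hcond
      set g1 := extMove θ M k f (n₀+1) g with hg1
      have H0 : ∀ m < n₀ + 1, Alive P Q M (CondS M T) f g m →
          CodeMove θ M k (histL M f m) (g m) :=
        fun m hm _ => hcf m (alive_of_le halG (Nat.lt_succ_iff.1 hm))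
      have hkT := hk M T hcnt hmodT hclT
      have hcf1 : ∀ m, Alive P Q M (CondS M T) f g1 m →
          CodeMove θ M k (histL M f m) (g1 m) :=
        ext_codefollow (fun n' hprev hal' => (hkT f g1).1 n' hprev hal') H0
      have hrun := (hkT f g1).2 hcf1
      have halT1 : Alive P Q M (CondS M T) f g1 n₀ :=
        (alive_congr_g (fun m hm => (extMove_lt (hm.trans n₀.lt_succ_self)).symm)).1 halT
      exact hrun.2 halT1

theorem soft_GW_to_G {n₀ : ℕ} :
    P2CompWinsGWithin Γ θ P Q n₀ → P2CompWinsG Γ θ P Q := by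
  rintro ⟨k, hk⟩
  refine ⟨k, fun M hcnt f g => ?_⟩
  refine ⟨(hk M hcnt f g).1, fun hcf => ?_⟩
  have hrun := (hk M hcnt f g).2 hcf
  exact ⟨hrun.1, fun hall => hrun.2 (hall n₀)⟩

end soft

def Term.code : Term → ℕ
  | .var i => Nat.pair 0 i
  | .zero => Nat.pair 1 0
  | .one => Nat.pair 2 0
  | .add t s => Nat.pair 3 (Nat.pair t.code s.code)
  | .mul t s => Nat.pair 4 (Nat.pair t.code s.code)

theorem Term.code_inj : ∀ {t s : Term}, t.code = s.code → t = s := by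
  intro t
  induction t with
  | var i =>
    intro s h
    cases s <;> simp [Term.code, Nat.pair_eq_pair] at h
    rw [h]
  | zero => intro s h; cases s <;> first | rfl | simp [Term.code, Nat.pair_eq_pair] at h
  | one => intro s h; cases s <;> first | rfl | simp [Term.code, Nat.pair_eq_pair] at h
  | add t1 t2 ih1 ih2 =>
    intro s h
    cases s <;> simp [Term.code, Nat.pair_eq_pair] at h
    rw [ih1 h.1, ih2 h.2]
  | mul t1 t2 ih1 ih2 =>
    intro s h
    cases s <;> simp [Term.code, Nat.pair_eq_pair] at h
    rw [ih1 h.1, ih2 h.2]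

instance : Countable Term := (Function.Injective.countable (f := Term.code)
  (fun _ _ h => Term.code_inj h))

def Formula.code : Formula → ℕ
  | .eq t s => Nat.pair 0 (Nat.pair t.code s.code)
  | .lt t s => Nat.pair 1 (Nat.pair t.code s.code)
  | .mem t X => Nat.pair 2 (Nat.pair t.code X)
  | .not φ => Nat.pair 3 φ.code
  | .and φ ψ => Nat.pair 4 (Nat.pair φ.code ψ.code)
  | .or φ ψ => Nat.pair 5 (Nat.pair φ.code ψ.code)
  | .imp φ ψ => Nat.pair 6 (Nat.pair φ.code ψ.code)
  | .allN x φ => Nat.pair 7 (Nat.pair x φ.code)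
  | .exN x φ => Nat.pair 8 (Nat.pair x φ.code)
  | .allS X φ => Nat.pair 9 (Nat.pair X φ.code)
  | .exS X φ => Nat.pair 10 (Nat.pair X φ.code)

theorem Formula.code_inj : ∀ {φ ψ : Formula}, φ.code = ψ.code → φ = ψ := by
  intro φ
  induction φ with
  | eq t s =>
    intro ψ h; cases ψ <;> simp [Formula.code, Nat.pair_eq_pair] at h
    rw [Term.code_inj h.1, Term.code_inj h.2]
  | lt t s =>
    intro ψ h; cases ψ <;> simp [Formula.code, Nat.pair_eq_pair] at h
    rw [Term.code_inj h.1, Term.code_inj h.2]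
  | mem t X =>
    intro ψ h; cases ψ <;> simp [Formula.code, Nat.pair_eq_pair] at h
    rw [Term.code_inj h.1, h.2]
  | not φ ih =>
    intro ψ h; cases ψ <;> simp [Formula.code, Nat.pair_eq_pair] at h
    rw [ih h]
  | and φ1 φ2 ih1 ih2 =>
    intro ψ h; cases ψ <;> simp [Formula.code, Nat.pair_eq_pair] at h
    rw [ih1 h.1, ih2 h.2]
  | or φ1 φ2 ih1 ih2 =>
    intro ψ h; cases ψ <;> simp [Formula.code, Nat.pair_eq_pair] at h
    rw [ih1 h.1, ih2 h.2]
  | imp φ1 φ2 ih1 ih2 =>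
    intro ψ h; cases ψ <;> simp [Formula.code, Nat.pair_eq_pair] at h
    rw [ih1 h.1, ih2 h.2]
  | allN x φ ih =>
    intro ψ h; cases ψ <;> simp [Formula.code, Nat.pair_eq_pair] at h
    rw [h.1, ih h.2]
  | exN x φ ih =>
    intro ψ h; cases ψ <;> simp [Formula.code, Nat.pair_eq_pair] at h
    rw [h.1, ih h.2]
  | allS X φ ih =>
    intro ψ h; cases ψ <;> simp [Formula.code, Nat.pair_eq_pair] at h
    rw [h.1, ih h.2]
  | exS X φ ih =>
    intro ψ h; cases ψ <;> simp [Formula.code, Nat.pair_eq_pair] at h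
    rw [h.1, ih h.2]

instance : Countable Formula := (Function.Injective.countable (f := Formula.code)
  (fun _ _ h => Formula.code_inj h))

open Classical

variable (Mk : ℕ → L1Struc) (Sk : ∀ k, Set (Set (Mk k).carrier))

abbrev SeqN := ∀ k, (Mk k).carrier
abbrev SeqS := ∀ k, Set (Mk k).carrier

def zseq : SeqN Mk := fun k => (Mk k).zero
def oseq : SeqN Mk := fun k => (Mk k).one
def addseq (c d : SeqN Mk) : SeqN Mk := fun k => (Mk k).add (c k) (d k)
def mulseq (c d : SeqN Mk) : SeqN Mk := fun k => (Mk k).mul (c k) (d k)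
def eseq : SeqS Mk := fun _ => ∅

/-- Pointwise Skolem witness for a number quantifier. -/
noncomputable def wN (φ : Formula) (x : ℕ) (v : ℕ → SeqN Mk) (V : ℕ → SeqS Mk) :
    SeqN Mk := fun k =>
  if h : ∃ a, Formula.Sat (Mk k) (Sk k) (Function.update (fun i => v i k) x a)
      (fun i => V i k) φ then h.choose else (Mk k).zero

theorem wN_spec (φ : Formula) (x : ℕ) (v : ℕ → SeqN Mk) (V : ℕ → SeqS Mk) (k : ℕ)
    (h : ∃ a, Formula.Sat (Mk k) (Sk k) (Function.update (fun i => v i k) x a)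
      (fun i => V i k) φ) :
    Formula.Sat (Mk k) (Sk k) (Function.update (fun i => v i k) x (wN Mk Sk φ x v V k))
      (fun i => V i k) φ := by
  unfold wN
  rw [dif_pos h]
  exact h.choose_spec

/-- Pointwise Skolem witness for a set quantifier. -/
noncomputable def wS (φ : Formula) (X : ℕ) (v : ℕ → SeqN Mk) (V : ℕ → SeqS Mk) :
    SeqS Mk := fun k =>
  if h : ∃ A ∈ Sk k, Formula.Sat (Mk k) (Sk k) (fun i => v i k)
      (Function.update (fun i => V i k) X A) φ then h.choose else ∅

theorem wS_spec (φ : Formula) (X : ℕ) (v : ℕ → SeqN Mk) (V : ℕ → SeqS Mk) (k : ℕ)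
    (h : ∃ A ∈ Sk k, Formula.Sat (Mk k) (Sk k) (fun i => v i k)
      (Function.update (fun i => V i k) X A) φ) :
    wS Mk Sk φ X v V k ∈ Sk k ∧
    Formula.Sat (Mk k) (Sk k) (fun i => v i k)
      (Function.update (fun i => V i k) X (wS Mk Sk φ X v V k)) φ := by
  unfold wS
  rw [dif_pos h]
  exact ⟨h.choose_spec.1, h.choose_spec.2⟩

theorem wS_empty_or (φ : Formula) (X : ℕ) (v : ℕ → SeqN Mk) (V : ℕ → SeqS Mk)
    (hSe : ∀ k, (∅ : Set (Mk k).carrier) ∈ Sk k) (k : ℕ) :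
    wS Mk Sk φ X v V k ∈ Sk k := by
  by_cases h : ∃ A ∈ Sk k, Formula.Sat (Mk k) (Sk k) (fun i => v i k)
      (Function.update (fun i => V i k) X A) φ
  · exact (wS_spec Mk Sk φ X v V k h).1
  · unfold wS
    rw [dif_neg h]
    exact hSe k

def vOfN : List (ℕ × SeqN Mk) → ℕ → SeqN Mk
  | [] => fun _ => zseq Mk
  | (j, a) :: L => Function.update (vOfN L) j a

def vOfS : List (ℕ × SeqS Mk) → ℕ → SeqS Mk
  | [] => fun _ => eseq Mk
  | (j, A) :: L => Function.update (vOfS L) j A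

theorem vOfN_eq (v : ℕ → SeqN Mk) : ∀ (l : List ℕ) (i : ℕ), i ∈ l →
    vOfN Mk (l.map fun j => (j, v j)) i = v i := by
  intro l
  induction l with
  | nil => intro i hi; cases hi
  | cons j l ih =>
    intro i hi
    show Function.update (vOfN Mk (l.map fun j => (j, v j))) j (v j) i = v i
    rcases eq_or_ne i j with rfl | hne
    · simp
    · rw [Function.update_of_ne hne]
      rw [List.mem_cons] at hi
      rcases hi with hi | hi
      · exact absurd hi hne
      · exact ih i hi

theorem vOfS_eq (V : ℕ → SeqS Mk) : ∀ (l : List ℕ) (i : ℕ), i ∈ l →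
    vOfS Mk (l.map fun j => (j, V j)) i = V i := by
  intro l
  induction l with
  | nil => intro i hi; cases hi
  | cons j l ih =>
    intro i hi
    show Function.update (vOfS Mk (l.map fun j => (j, V j))) j (V j) i = V i
    rcases eq_or_ne i j with rfl | hne
    · simp
    · rw [Function.update_of_ne hne]
      rw [List.mem_cons] at hi
      rcases hi with hi | hi
      · exact absurd hi hne
      · exact ih i hi

variable (nseed : Set (SeqN Mk)) (sseed : Set (SeqS Mk))

/-- The stages of the countable Skolem closure. -/
noncomputable def stage : ℕ → Set (SeqN Mk) × Set (SeqS Mk)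
  | 0 => (nseed ∪ {zseq Mk, oseq Mk}, sseed ∪ {eseq Mk})
  | s+1 =>
    let N := (stage s).1
    let F := (stage s).2
    (N ∪ ((Set.range fun p : ↥N × ↥N => addseq Mk p.1.1 p.2.1)
       ∪ (Set.range fun p : ↥N × ↥N => mulseq Mk p.1.1 p.2.1)
       ∪ (Set.range fun q : Formula × ℕ × List (ℕ × ↥N) × List (ℕ × ↥F) =>
           wN Mk Sk q.1 q.2.1 (vOfN Mk (q.2.2.1.map fun p => (p.1, p.2.1)))
             (vOfS Mk (q.2.2.2.map fun p => (p.1, p.2.1))))),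
     F ∪ (Set.range fun q : Formula × ℕ × List (ℕ × ↥N) × List (ℕ × ↥F) =>
           wS Mk Sk q.1 q.2.1 (vOfN Mk (q.2.2.1.map fun p => (p.1, p.2.1)))
             (vOfS Mk (q.2.2.2.map fun p => (p.1, p.2.1)))))

def NN : Set (SeqN Mk) := ⋃ s, (stage Mk Sk nseed sseed s).1
def FF : Set (SeqS Mk) := ⋃ s, (stage Mk Sk nseed sseed s).2

theorem stage_succ_mono (s : ℕ) :
    (stage Mk Sk nseed sseed s).1 ⊆ (stage Mk Sk nseed sseed (s+1)).1 ∧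
    (stage Mk Sk nseed sseed s).2 ⊆ (stage Mk Sk nseed sseed (s+1)).2 :=
  ⟨Set.subset_union_left, Set.subset_union_left⟩

theorem stage_mono {s t : ℕ} (h : s ≤ t) :
    (stage Mk Sk nseed sseed s).1 ⊆ (stage Mk Sk nseed sseed t).1 ∧
    (stage Mk Sk nseed sseed s).2 ⊆ (stage Mk Sk nseed sseed t).2 := by
  induction t with
  | zero => rw [Nat.le_zero.1 h]; exact ⟨subset_rfl, subset_rfl⟩
  | succ t ih =>
    rcases eq_or_lt_of_le h with rfl | h'
    · exact ⟨subset_rfl, subset_rfl⟩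
    · have := ih (Nat.lt_succ_iff.1 h')
      exact ⟨this.1.trans (stage_succ_mono Mk Sk nseed sseed t).1,
        this.2.trans (stage_succ_mono Mk Sk nseed sseed t).2⟩

theorem mem_NN_of_stage {s : ℕ} {c : SeqN Mk} (h : c ∈ (stage Mk Sk nseed sseed s).1) :
    c ∈ NN Mk Sk nseed sseed := Set.mem_iUnion.2 ⟨s, h⟩

theorem mem_FF_of_stage {s : ℕ} {B : SeqS Mk} (h : B ∈ (stage Mk Sk nseed sseed s).2) :
    B ∈ FF Mk Sk nseed sseed := Set.mem_iUnion.2 ⟨s, h⟩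

theorem zseq_mem : zseq Mk ∈ NN Mk Sk nseed sseed :=
  mem_NN_of_stage Mk Sk nseed sseed (s := 0) (Or.inr (Or.inl rfl))

theorem oseq_mem : oseq Mk ∈ NN Mk Sk nseed sseed :=
  mem_NN_of_stage Mk Sk nseed sseed (s := 0) (Or.inr (Or.inr rfl))

theorem eseq_mem : eseq Mk ∈ FF Mk Sk nseed sseed :=
  mem_FF_of_stage Mk Sk nseed sseed (s := 0) (Or.inr rfl)

theorem nseed_mem {c : SeqN Mk} (h : c ∈ nseed) : c ∈ NN Mk Sk nseed sseed :=
  mem_NN_of_stage Mk Sk nseed sseed (s := 0) (Or.inl h)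

theorem sseed_mem {B : SeqS Mk} (h : B ∈ sseed) : B ∈ FF Mk Sk nseed sseed :=
  mem_FF_of_stage Mk Sk nseed sseed (s := 0) (Or.inl h)

theorem addseq_mem {c d : SeqN Mk} (hc : c ∈ NN Mk Sk nseed sseed)
    (hd : d ∈ NN Mk Sk nseed sseed) : addseq Mk c d ∈ NN Mk Sk nseed sseed := by
  obtain ⟨s, hs⟩ := Set.mem_iUnion.1 hc
  obtain ⟨t, ht⟩ := Set.mem_iUnion.1 hd
  have hs' := (stage_mono Mk Sk nseed sseed (le_max_left s t)).1 hs
  have ht' := (stage_mono Mk Sk nseed sseed (le_max_right s t)).1 ht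
  exact mem_NN_of_stage Mk Sk nseed sseed (s := max s t + 1)
    (Or.inr (Or.inl (Or.inl ⟨(⟨c, hs'⟩, ⟨d, ht'⟩), rfl⟩)))

theorem mulseq_mem {c d : SeqN Mk} (hc : c ∈ NN Mk Sk nseed sseed)
    (hd : d ∈ NN Mk Sk nseed sseed) : mulseq Mk c d ∈ NN Mk Sk nseed sseed := by
  obtain ⟨s, hs⟩ := Set.mem_iUnion.1 hc
  obtain ⟨t, ht⟩ := Set.mem_iUnion.1 hd
  have hs' := (stage_mono Mk Sk nseed sseed (le_max_left s t)).1 hs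
  have ht' := (stage_mono Mk Sk nseed sseed (le_max_right s t)).1 ht
  exact mem_NN_of_stage Mk Sk nseed sseed (s := max s t + 1)
    (Or.inr (Or.inl (Or.inr ⟨(⟨c, hs'⟩, ⟨d, ht'⟩), rfl⟩)))

theorem exists_stage_list (v : ℕ → SeqN Mk) (V : ℕ → SeqS Mk)
    (hv : ∀ i, v i ∈ NN Mk Sk nseed sseed) (hV : ∀ i, V i ∈ FF Mk Sk nseed sseed)
    (l l' : List ℕ) :
    ∃ s, (∀ i ∈ l, v i ∈ (stage Mk Sk nseed sseed s).1) ∧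
      (∀ i ∈ l', V i ∈ (stage Mk Sk nseed sseed s).2) := by
  induction l with
  | nil =>
    induction l' with
    | nil => exact ⟨0, by simp, by simp⟩
    | cons j l' ih =>
      obtain ⟨s, hs1, hs2⟩ := ih
      obtain ⟨t, ht⟩ := Set.mem_iUnion.1 (hV j)
      refine ⟨max s t, by simp, ?_⟩
      intro i hi
      rw [List.mem_cons] at hi
      rcases hi with rfl | hi
      · exact (stage_mono Mk Sk nseed sseed (le_max_right s t)).2 ht
      · exact (stage_mono Mk Sk nseed sseed (le_max_left s t)).2 (hs2 i hi)
  | cons j l ih =>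
    obtain ⟨s, hs1, hs2⟩ := ih
    obtain ⟨t, ht⟩ := Set.mem_iUnion.1 (hv j)
    refine ⟨max s t, ?_, fun i hi => (stage_mono Mk Sk nseed sseed (le_max_left s t)).2 (hs2 i hi)⟩
    intro i hi
    rw [List.mem_cons] at hi
    rcases hi with rfl | hi
    · exact (stage_mono Mk Sk nseed sseed (le_max_right s t)).1 ht
    · exact (stage_mono Mk Sk nseed sseed (le_max_left s t)).1 (hs1 i hi)

open Classical

variable (Mk : ℕ → L1Struc) (Sk : ∀ k, Set (Set (Mk k).carrier))
variable (nseed : Set (SeqN Mk)) (sseed : Set (SeqS Mk))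

theorem stage_countable (hn : nseed.Countable) (hs : sseed.Countable) :
    ∀ s, (stage Mk Sk nseed sseed s).1.Countable ∧ (stage Mk Sk nseed sseed s).2.Countable := by
  intro s
  induction s with
  | zero =>
    exact ⟨hn.union ((Set.countable_singleton _).insert _),
      hs.union (Set.countable_singleton _)⟩
  | succ s ih =>
    haveI := ih.1.to_subtype
    haveI := ih.2.to_subtype
    refine ⟨ih.1.union (((Set.countable_range _).union (Set.countable_range _)).union
      (Set.countable_range _)), ih.2.union (Set.countable_range _)⟩

theorem NN_countable (hn : nseed.Countable) (hs : sseed.Countable) :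
    (NN Mk Sk nseed sseed).Countable :=
  Set.countable_iUnion fun s => (stage_countable Mk Sk nseed sseed hn hs s).1

theorem FF_countable (hn : nseed.Countable) (hs : sseed.Countable) :
    (FF Mk Sk nseed sseed).Countable :=
  Set.countable_iUnion fun s => (stage_countable Mk Sk nseed sseed hn hs s).2

theorem exists_skolemN (φ : Formula) (x : ℕ) (v : ℕ → SeqN Mk) (V : ℕ → SeqS Mk)
    (hv : ∀ i, v i ∈ NN Mk Sk nseed sseed) (hV : ∀ i, V i ∈ FF Mk Sk nseed sseed) :
    ∃ w ∈ NN Mk Sk nseed sseed, ∀ k,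
      (∃ a, Formula.Sat (Mk k) (Sk k) (Function.update (fun i => v i k) x a)
        (fun i => V i k) φ) →
      Formula.Sat (Mk k) (Sk k) (Function.update (fun i => v i k) x (w k))
        (fun i => V i k) φ := by
  have hAfin := Formula.numFV_finite φ
  have hBfin := Formula.setFV_finite φ
  set LA := hAfin.toFinset.toList with hLA
  set LB := hBfin.toFinset.toList with hLB
  have hmemA : ∀ i, i ∈ LA ↔ i ∈ φ.numFV := by
    intro i
    rw [hLA, Finset.mem_toList, Set.Finite.mem_toFinset]
  have hmemB : ∀ i, i ∈ LB ↔ i ∈ φ.setFV := by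
    intro i
    rw [hLB, Finset.mem_toList, Set.Finite.mem_toFinset]
  obtain ⟨s, hs1, hs2⟩ := exists_stage_list Mk Sk nseed sseed v V hv hV LA LB
  set N := (stage Mk Sk nseed sseed s).1 with hN
  set F := (stage Mk Sk nseed sseed s).2 with hF
  set L1 : List (ℕ × ↥N) := LA.pmap (fun i h => (i, (⟨v i, h⟩ : ↥N))) hs1 with hL1
  set L2 : List (ℕ × ↥F) := LB.pmap (fun i h => (i, (⟨V i, h⟩ : ↥F))) hs2 with hL2
  have hL1m : L1.map (fun p => (p.1, p.2.1)) = LA.map (fun i => (i, v i)) := by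
    rw [hL1, List.map_pmap]
    simp [List.pmap_eq_map]
  have hL2m : L2.map (fun p => (p.1, p.2.1)) = LB.map (fun i => (i, V i)) := by
    rw [hL2, List.map_pmap]
    simp [List.pmap_eq_map]
  set v' := vOfN Mk (LA.map fun i => (i, v i)) with hv'
  set V' := vOfS Mk (LB.map fun i => (i, V i)) with hV'
  have hwmem : wN Mk Sk φ x v' V' ∈ NN Mk Sk nseed sseed := by
    refine mem_NN_of_stage Mk Sk nseed sseed (s := s + 1)
      (Or.inr (Or.inr ⟨(φ, x, L1, L2), ?_⟩))
    show wN Mk Sk φ x (vOfN Mk (L1.map fun p => (p.1, p.2.1)))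
      (vOfS Mk (L2.map fun p => (p.1, p.2.1))) = wN Mk Sk φ x v' V'
    rw [hL1m, hL2m]
  refine ⟨wN Mk Sk φ x v' V', hwmem, ?_⟩
  intro k hex
  have hagreeN : ∀ i ∈ φ.numFV, v' i = v i := by
    intro i hi
    exact vOfN_eq Mk v LA i ((hmemA i).2 hi)
  have hagreeS : ∀ i ∈ φ.setFV, V' i = V i := by
    intro i hi
    exact vOfS_eq Mk V LB i ((hmemB i).2 hi)
  have hcongr : ∀ b : (Mk k).carrier,
      Formula.Sat (Mk k) (Sk k) (Function.update (fun i => v i k) x b) (fun i => V i k) φ ↔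
      Formula.Sat (Mk k) (Sk k) (Function.update (fun i => v' i k) x b) (fun i => V' i k) φ := by
    intro b
    refine Formula.sat_congr (fun i hi => ?_) (fun i hi => ?_)
    · rcases eq_or_ne i x with rfl | hne
      · simp
      · rw [Function.update_of_ne hne, Function.update_of_ne hne, hagreeN i hi]
    · rw [hagreeS i hi]
  have hex' : ∃ a, Formula.Sat (Mk k) (Sk k) (Function.update (fun i => v' i k) x a)
      (fun i => V' i k) φ := by
    obtain ⟨a, ha⟩ := hex
    exact ⟨a, (hcongr a).1 ha⟩
  have := wN_spec Mk Sk φ x v' V' k hex'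
  exact (hcongr _).2 this

theorem exists_skolemS (φ : Formula) (X : ℕ) (v : ℕ → SeqN Mk) (V : ℕ → SeqS Mk)
    (hSe : ∀ k, (∅ : Set (Mk k).carrier) ∈ Sk k)
    (hv : ∀ i, v i ∈ NN Mk Sk nseed sseed) (hV : ∀ i, V i ∈ FF Mk Sk nseed sseed) :
    ∃ W ∈ FF Mk Sk nseed sseed, (∀ k, W k ∈ Sk k) ∧ ∀ k,
      (∃ A ∈ Sk k, Formula.Sat (Mk k) (Sk k) (fun i => v i k)
        (Function.update (fun i => V i k) X A) φ) →
      Formula.Sat (Mk k) (Sk k) (fun i => v i k)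
        (Function.update (fun i => V i k) X (W k)) φ := by
  have hAfin := Formula.numFV_finite φ
  have hBfin := Formula.setFV_finite φ
  set LA := hAfin.toFinset.toList with hLA
  set LB := hBfin.toFinset.toList with hLB
  have hmemA : ∀ i, i ∈ LA ↔ i ∈ φ.numFV := by
    intro i
    rw [hLA, Finset.mem_toList, Set.Finite.mem_toFinset]
  have hmemB : ∀ i, i ∈ LB ↔ i ∈ φ.setFV := by
    intro i
    rw [hLB, Finset.mem_toList, Set.Finite.mem_toFinset]
  obtain ⟨s, hs1, hs2⟩ := exists_stage_list Mk Sk nseed sseed v V hv hV LA LB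
  set N := (stage Mk Sk nseed sseed s).1 with hN
  set F := (stage Mk Sk nseed sseed s).2 with hF
  set L1 : List (ℕ × ↥N) := LA.pmap (fun i h => (i, (⟨v i, h⟩ : ↥N))) hs1 with hL1
  set L2 : List (ℕ × ↥F) := LB.pmap (fun i h => (i, (⟨V i, h⟩ : ↥F))) hs2 with hL2
  have hL1m : L1.map (fun p => (p.1, p.2.1)) = LA.map (fun i => (i, v i)) := by
    rw [hL1, List.map_pmap]
    simp [List.pmap_eq_map]
  have hL2m : L2.map (fun p => (p.1, p.2.1)) = LB.map (fun i => (i, V i)) := by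
    rw [hL2, List.map_pmap]
    simp [List.pmap_eq_map]
  set v' := vOfN Mk (LA.map fun i => (i, v i)) with hv'
  set V' := vOfS Mk (LB.map fun i => (i, V i)) with hV'
  have hwmem : wS Mk Sk φ X v' V' ∈ FF Mk Sk nseed sseed := by
    refine mem_FF_of_stage Mk Sk nseed sseed (s := s + 1)
      (Or.inr ⟨(φ, X, L1, L2), ?_⟩)
    show wS Mk Sk φ X (vOfN Mk (L1.map fun p => (p.1, p.2.1)))
      (vOfS Mk (L2.map fun p => (p.1, p.2.1))) = wS Mk Sk φ X v' V'
    rw [hL1m, hL2m]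
  refine ⟨wS Mk Sk φ X v' V', hwmem, wS_empty_or Mk Sk φ X v' V' hSe, ?_⟩
  intro k hex
  have hagreeN : ∀ i ∈ φ.numFV, v' i = v i := by
    intro i hi
    exact vOfN_eq Mk v LA i ((hmemA i).2 hi)
  have hagreeS : ∀ i ∈ φ.setFV, V' i = V i := by
    intro i hi
    exact vOfS_eq Mk V LB i ((hmemB i).2 hi)
  have hcongr : ∀ B : Set (Mk k).carrier,
      Formula.Sat (Mk k) (Sk k) (fun i => v i k) (Function.update (fun i => V i k) X B) φ ↔
      Formula.Sat (Mk k) (Sk k) (fun i => v' i k) (Function.update (fun i => V' i k) X B) φ := by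
    intro B
    refine Formula.sat_congr (fun i hi => (congrFun (hagreeN i hi) k).symm) (fun i hi => ?_)
    · rcases eq_or_ne i X with rfl | hne
      · simp
      · rw [Function.update_of_ne hne, Function.update_of_ne hne, hagreeS i hi]
  have hex' : ∃ A ∈ Sk k, Formula.Sat (Mk k) (Sk k) (fun i => v' i k)
      (Function.update (fun i => V' i k) X A) φ := by
    obtain ⟨A, hA, ha⟩ := hex
    exact ⟨A, hA, (hcongr A).1 ha⟩
  have := wS_spec Mk Sk φ X v' V' k hex'
  exact (hcongr _).2 this.2

open Classical Filter

section ultra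
variable (U : Ultrafilter ℕ)

theorem umem_mono {p q : ℕ → Prop} (h : {k | p k} ∈ U) (h2 : ∀ k, p k → q k) :
    {k | q k} ∈ U := Filter.mem_of_superset h h2

theorem uand {p q : ℕ → Prop} :
    {k | p k ∧ q k} ∈ U ↔ ({k | p k} ∈ U ∧ {k | q k} ∈ U) := by
  constructor
  · intro h
    exact ⟨umem_mono U h (fun k hk => hk.1), umem_mono U h (fun k hk => hk.2)⟩
  · intro ⟨h1, h2⟩
    exact Filter.inter_mem h1 h2

theorem unot {p : ℕ → Prop} : {k | ¬ p k} ∈ U ↔ ¬ ({k | p k} ∈ U) := by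
  have : {k | ¬ p k} = {k | p k}ᶜ := rfl
  rw [this, Ultrafilter.compl_mem_iff_notMem]

theorem uor {p q : ℕ → Prop} :
    {k | p k ∨ q k} ∈ U ↔ ({k | p k} ∈ U ∨ {k | q k} ∈ U) := by
  have : {k | p k ∨ q k} = {k | p k} ∪ {k | q k} := rfl
  rw [this, Ultrafilter.union_mem_iff]

theorem uimp {p q : ℕ → Prop} :
    {k | p k → q k} ∈ U ↔ (({k | p k} ∈ U) → ({k | q k} ∈ U)) := by
  have : {k | p k → q k} = {k | ¬ p k ∨ q k} := by
    ext k; exact imp_iff_not_or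
  rw [this, uor, unot]
  tauto

theorem umem_congr {p q : ℕ → Prop} (h : {k | p k ↔ q k} ∈ U) :
    ({k | p k} ∈ U ↔ {k | q k} ∈ U) := by
  constructor
  · intro hp
    exact umem_mono U (Filter.inter_mem h hp) (fun k hk => hk.1.1 hk.2)
  · intro hq
    exact umem_mono U (Filter.inter_mem h hq) (fun k hk => hk.1.2 hk.2)

end ultra

section quot
variable (Mk : ℕ → L1Struc) (Sk : ∀ k, Set (Set (Mk k).carrier))
variable (nseed : Set (SeqN Mk)) (sseed : Set (SeqS Mk))
variable (U : Ultrafilter ℕ)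

def usetoid : Setoid (↥(NN Mk Sk nseed sseed)) where
  r c d := {k | c.1 k = d.1 k} ∈ U
  iseqv := by
    refine ⟨fun c => ?_, fun {c d} h => ?_, fun {c d e} h1 h2 => ?_⟩
    · have : {k | c.1 k = c.1 k} = Set.univ := by ext k; simp
      rw [this]; exact Filter.univ_mem
    · exact umem_mono U h (fun k hk => hk.symm)
    · exact umem_mono U (Filter.inter_mem h1 h2) (fun k hk => hk.1.trans hk.2)

@[reducible] def NCar := Quotient (usetoid Mk Sk nseed sseed U)

abbrev mkq (c : ↥(NN Mk Sk nseed sseed)) : NCar Mk Sk nseed sseed U :=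
  Quotient.mk _ c

theorem mkq_eq {c d : ↥(NN Mk Sk nseed sseed)} :
    mkq Mk Sk nseed sseed U c = mkq Mk Sk nseed sseed U d ↔
      {k | c.1 k = d.1 k} ∈ U := by
  exact Quotient.eq

theorem mkq_surj (x : NCar Mk Sk nseed sseed U) :
    ∃ c, mkq Mk Sk nseed sseed U c = x := Quotient.exists_rep x

@[reducible] noncomputable def NStruc : L1Struc where
  carrier := NCar Mk Sk nseed sseed U
  zero := mkq Mk Sk nseed sseed U ⟨zseq Mk, zseq_mem Mk Sk nseed sseed⟩
  one := mkq Mk Sk nseed sseed U ⟨oseq Mk, oseq_mem Mk Sk nseed sseed⟩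
  add := Quotient.map₂
    (fun c d => ⟨addseq Mk c.1 d.1, addseq_mem Mk Sk nseed sseed c.2 d.2⟩)
    (fun c c' hc d d' hd => umem_mono U (Filter.inter_mem hc hd)
      (fun k hk => by show (Mk k).add _ _ = (Mk k).add _ _; rw [hk.1, hk.2]))
  mul := Quotient.map₂
    (fun c d => ⟨mulseq Mk c.1 d.1, mulseq_mem Mk Sk nseed sseed c.2 d.2⟩)
    (fun c c' hc d d' hd => umem_mono U (Filter.inter_mem hc hd)
      (fun k hk => by show (Mk k).mul _ _ = (Mk k).mul _ _; rw [hk.1, hk.2]))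
  lt := Quotient.lift₂ (fun c d => {k | (Mk k).lt (c.1 k) (d.1 k)} ∈ U)
    (fun c d c' d' hc hd => propext (umem_congr U (umem_mono U (Filter.inter_mem hc hd)
      (fun k hk => by
        have h1 : c.1 k = c'.1 k := hk.1
        have h2 : d.1 k = d'.1 k := hk.2
        show (Mk k).lt (c.1 k) (d.1 k) ↔ (Mk k).lt (c'.1 k) (d'.1 k)
        rw [h1, h2]))))

noncomputable def clsSet (B : SeqS Mk) : Set (NStruc Mk Sk nseed sseed U).carrier :=
  {x | Quotient.lift (fun c : ↥(NN Mk Sk nseed sseed) => {k | c.1 k ∈ B k} ∈ U)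
    (fun c d h => propext (umem_congr U (umem_mono U h
      (fun k hk => by
        have h1 : c.1 k = d.1 k := hk
        show c.1 k ∈ B k ↔ d.1 k ∈ B k
        rw [h1]))))
    x}

theorem mem_clsSet {B : SeqS Mk} {c : ↥(NN Mk Sk nseed sseed)} :
    mkq Mk Sk nseed sseed U c ∈ clsSet Mk Sk nseed sseed U B ↔
      {k | c.1 k ∈ B k} ∈ U := Iff.rfl

/-- The second-order part of the countable pseudo-ultraproduct. -/
def SN : Set (Set (NStruc Mk Sk nseed sseed U).carrier) :=
  {A | ∃ B ∈ FF Mk Sk nseed sseed, (∀ k, B k ∈ Sk k) ∧ A = clsSet Mk Sk nseed sseed U B}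

theorem add_mk (c d : ↥(NN Mk Sk nseed sseed)) :
    (NStruc Mk Sk nseed sseed U).add (mkq Mk Sk nseed sseed U c) (mkq Mk Sk nseed sseed U d) =
      mkq Mk Sk nseed sseed U ⟨addseq Mk c.1 d.1, addseq_mem Mk Sk nseed sseed c.2 d.2⟩ := by
  simp only [NStruc]
  exact Quotient.map₂_mk _ _ _ _

theorem mul_mk (c d : ↥(NN Mk Sk nseed sseed)) :
    (NStruc Mk Sk nseed sseed U).mul (mkq Mk Sk nseed sseed U c) (mkq Mk Sk nseed sseed U d) =
      mkq Mk Sk nseed sseed U ⟨mulseq Mk c.1 d.1, mulseq_mem Mk Sk nseed sseed c.2 d.2⟩ := by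
  simp only [NStruc]
  exact Quotient.map₂_mk _ _ _ _

theorem lt_mk (c d : ↥(NN Mk Sk nseed sseed)) :
    (NStruc Mk Sk nseed sseed U).lt (mkq Mk Sk nseed sseed U c) (mkq Mk Sk nseed sseed U d) ↔
      {k | (Mk k).lt (c.1 k) (d.1 k)} ∈ U := by
  simp only [NStruc]
  rw [Quotient.lift₂_mk]

theorem val_mem (t : Term) (v : ℕ → ↥(NN Mk Sk nseed sseed)) :
    (fun k => Term.val (Mk k) (fun i => (v i).1 k) t) ∈ NN Mk Sk nseed sseed := by
  induction t with
  | var i => exact (v i).2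
  | zero => exact zseq_mem Mk Sk nseed sseed
  | one => exact oseq_mem Mk Sk nseed sseed
  | add t s iht ihs => exact addseq_mem Mk Sk nseed sseed iht ihs
  | mul t s iht ihs => exact mulseq_mem Mk Sk nseed sseed iht ihs

theorem val_mk (t : Term) (v : ℕ → ↥(NN Mk Sk nseed sseed)) :
    Term.val (NStruc Mk Sk nseed sseed U) (fun i => mkq Mk Sk nseed sseed U (v i)) t =
      mkq Mk Sk nseed sseed U
        ⟨fun k => Term.val (Mk k) (fun i => (v i).1 k) t, val_mem Mk Sk nseed sseed t v⟩ := by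
  induction t with
  | var i => rfl
  | zero => rfl
  | one => rfl
  | add t s iht ihs =>
    show (NStruc Mk Sk nseed sseed U).add _ _ = _
    rw [iht, ihs, add_mk]
    rfl
  | mul t s iht ihs =>
    show (NStruc Mk Sk nseed sseed U).mul _ _ = _
    rw [iht, ihs, mul_mk]
    rfl

theorem upd_comp_mk (v : ℕ → ↥(NN Mk Sk nseed sseed)) (x : ℕ) (c : ↥(NN Mk Sk nseed sseed)) :
    (fun i => mkq Mk Sk nseed sseed U (Function.update v x c i)) =
      Function.update (fun i => mkq Mk Sk nseed sseed U (v i)) x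
        (mkq Mk Sk nseed sseed U c) := by
  funext i
  rcases eq_or_ne i x with rfl | h
  · simp
  · rw [Function.update_of_ne h, Function.update_of_ne h]

theorem upd_comp_comp (v : ℕ → ↥(NN Mk Sk nseed sseed)) (x : ℕ)
    (c : ↥(NN Mk Sk nseed sseed)) (k : ℕ) :
    (fun i => ((Function.update v x c) i).1 k) =
      Function.update (fun i => (v i).1 k) x (c.1 k) := by
  funext i
  rcases eq_or_ne i x with rfl | h
  · simp
  · rw [Function.update_of_ne h, Function.update_of_ne h]

theorem upd_cls (V : ℕ → SeqS Mk) (X : ℕ) (B : SeqS Mk) :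
    (fun i => clsSet Mk Sk nseed sseed U (Function.update V X B i)) =
      Function.update (fun i => clsSet Mk Sk nseed sseed U (V i)) X
        (clsSet Mk Sk nseed sseed U B) := by
  funext i
  rcases eq_or_ne i X with rfl | h
  · simp
  · rw [Function.update_of_ne h, Function.update_of_ne h]

theorem upd_comp_S (V : ℕ → SeqS Mk) (X : ℕ) (B : SeqS Mk) (k : ℕ) :
    (fun i => (Function.update V X B) i k) = Function.update (fun i => V i k) X (B k) := by
  funext i
  rcases eq_or_ne i X with rfl | h
  · simp
  · rw [Function.update_of_ne h, Function.update_of_ne h]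

end quot

open Classical Filter

section los
variable (Mk : ℕ → L1Struc) (Sk : ∀ k, Set (Set (Mk k).carrier))
variable (nseed : Set (SeqN Mk)) (sseed : Set (SeqS Mk))
variable (U : Ultrafilter ℕ)

theorem upd_FF {V : ℕ → SeqS Mk} {B : SeqS Mk} (hV : ∀ i, V i ∈ FF Mk Sk nseed sseed)
    (hB : B ∈ FF Mk Sk nseed sseed) (X : ℕ) :
    ∀ i, Function.update V X B i ∈ FF Mk Sk nseed sseed := by
  intro i
  rcases eq_or_ne i X with rfl | h
  · simpa using hB
  · rw [Function.update_of_ne h]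
    exact hV i

theorem los (hSe : ∀ k, (∅ : Set (Mk k).carrier) ∈ Sk k) :
    ∀ (φ : Formula) (v : ℕ → ↥(NN Mk Sk nseed sseed)) (V : ℕ → SeqS Mk),
      (∀ i, V i ∈ FF Mk Sk nseed sseed) →
      (Formula.Sat (NStruc Mk Sk nseed sseed U) (SN Mk Sk nseed sseed U)
          (fun i => mkq Mk Sk nseed sseed U (v i))
          (fun i => clsSet Mk Sk nseed sseed U (V i)) φ ↔
        {k | Formula.Sat (Mk k) (Sk k) (fun i => (v i).1 k) (fun i => V i k) φ} ∈ U) := by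
  intro φ
  induction φ with
  | eq t s =>
    intro v V hV
    simp only [Formula.Sat]
    rw [val_mk, val_mk]
    exact mkq_eq Mk Sk nseed sseed U
  | lt t s =>
    intro v V hV
    simp only [Formula.Sat]
    rw [val_mk, val_mk]
    exact lt_mk Mk Sk nseed sseed U _ _
  | mem t X =>
    intro v V hV
    simp only [Formula.Sat]
    rw [val_mk]
    exact mem_clsSet Mk Sk nseed sseed U
  | not φ ih =>
    intro v V hV
    simp only [Formula.Sat]
    rw [ih v V hV]
    exact (unot U).symm
  | and φ ψ ihφ ihψ =>
    intro v V hV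
    simp only [Formula.Sat]
    rw [ihφ v V hV, ihψ v V hV]
    exact (uand U).symm
  | or φ ψ ihφ ihψ =>
    intro v V hV
    simp only [Formula.Sat]
    rw [ihφ v V hV, ihψ v V hV]
    exact (uor U).symm
  | imp φ ψ ihφ ihψ =>
    intro v V hV
    simp only [Formula.Sat]
    rw [ihφ v V hV, ihψ v V hV]
    exact (uimp U).symm
  | allN x φ ih =>
    intro v V hV
    simp only [Formula.Sat]
    constructor
    · intro hall
      by_contra hnot
      have hex : {k | ∃ a, ¬ Formula.Sat (Mk k) (Sk k)
          (Function.update (fun i => (v i).1 k) x a) (fun i => V i k) φ} ∈ U :=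
        umem_mono U ((unot U).2 hnot) (fun k hk => not_forall.1 hk)
      obtain ⟨w, hw, hspec⟩ := exists_skolemN Mk Sk nseed sseed (.not φ) x
        (fun i => (v i).1) V (fun i => (v i).2) hV
      have hU1 : {k | ¬ Formula.Sat (Mk k) (Sk k)
          (Function.update (fun i => (v i).1 k) x (w k)) (fun i => V i k) φ} ∈ U :=
        umem_mono U hex (fun k hk => hspec k hk)
      have hsatw := hall (mkq Mk Sk nseed sseed U ⟨w, hw⟩)
      rw [← upd_comp_mk] at hsatw
      have hU2 := (ih (Function.update v x ⟨w, hw⟩) V hV).1 hsatw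
      simp only [upd_comp_comp] at hU2
      obtain ⟨k, hk1, hk2⟩ := Filter.nonempty_of_mem (Filter.inter_mem hU1 hU2)
      exact hk1 hk2
    · intro hU a
      obtain ⟨c, rfl⟩ := mkq_surj Mk Sk nseed sseed U a
      have h1 : {k | Formula.Sat (Mk k) (Sk k)
          (Function.update (fun i => (v i).1 k) x (c.1 k)) (fun i => V i k) φ} ∈ U :=
        umem_mono U hU (fun k hk => hk (c.1 k))
      have h2 := (ih (Function.update v x c) V hV).2
        (by simp only [upd_comp_comp]; exact h1)
      rwa [upd_comp_mk] at h2
  | exN x φ ih =>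
    intro v V hV
    simp only [Formula.Sat]
    constructor
    · rintro ⟨a, ha⟩
      obtain ⟨c, rfl⟩ := mkq_surj Mk Sk nseed sseed U a
      rw [← upd_comp_mk] at ha
      have := (ih (Function.update v x c) V hV).1 ha
      simp only [upd_comp_comp] at this
      exact umem_mono U this (fun k hk => ⟨c.1 k, hk⟩)
    · intro hU
      obtain ⟨w, hw, hspec⟩ := exists_skolemN Mk Sk nseed sseed φ x
        (fun i => (v i).1) V (fun i => (v i).2) hV
      have h1 : {k | Formula.Sat (Mk k) (Sk k)
          (Function.update (fun i => (v i).1 k) x (w k)) (fun i => V i k) φ} ∈ U :=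
        umem_mono U hU (fun k hk => hspec k hk)
      have h2 := (ih (Function.update v x ⟨w, hw⟩) V hV).2
        (by simp only [upd_comp_comp]; exact h1)
      rw [upd_comp_mk] at h2
      exact ⟨_, h2⟩
  | allS X φ ih =>
    intro v V hV
    simp only [Formula.Sat]
    constructor
    · intro hall
      by_contra hnot
      have hex : {k | ∃ A ∈ Sk k, ¬ Formula.Sat (Mk k) (Sk k) (fun i => (v i).1 k)
          (Function.update (fun i => V i k) X A) φ} ∈ U :=
        umem_mono U ((unot U).2 hnot) (fun k hk => by
          push_neg at hk
          exact hk)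
      obtain ⟨W, hWFF, hWS, hspec⟩ := exists_skolemS Mk Sk nseed sseed (.not φ) X
        (fun i => (v i).1) V hSe (fun i => (v i).2) hV
      have hU1 : {k | ¬ Formula.Sat (Mk k) (Sk k) (fun i => (v i).1 k)
          (Function.update (fun i => V i k) X (W k)) φ} ∈ U :=
        umem_mono U hex (fun k hk => hspec k hk)
      have hmem : clsSet Mk Sk nseed sseed U W ∈ SN Mk Sk nseed sseed U :=
        ⟨W, hWFF, hWS, rfl⟩
      have hsatW := hall (clsSet Mk Sk nseed sseed U W) hmem
      rw [← upd_cls] at hsatW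
      have hU2 := (ih v (Function.update V X W) (upd_FF Mk Sk nseed sseed hV hWFF X)).1 hsatW
      simp only [upd_comp_S] at hU2
      obtain ⟨k, hk1, hk2⟩ := Filter.nonempty_of_mem (Filter.inter_mem hU1 hU2)
      exact hk1 hk2
    · intro hU A hA
      obtain ⟨B, hBFF, hBS, rfl⟩ := hA
      have h1 : {k | Formula.Sat (Mk k) (Sk k) (fun i => (v i).1 k)
          (Function.update (fun i => V i k) X (B k)) φ} ∈ U :=
        umem_mono U hU (fun k hk => hk (B k) (hBS k))
      have h2 := (ih v (Function.update V X B) (upd_FF Mk Sk nseed sseed hV hBFF X)).2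
        (by simp only [upd_comp_S]; exact h1)
      rwa [upd_cls] at h2
  | exS X φ ih =>
    intro v V hV
    simp only [Formula.Sat]
    constructor
    · rintro ⟨A, hA, hsat⟩
      obtain ⟨B, hBFF, hBS, rfl⟩ := hA
      rw [← upd_cls] at hsat
      have := (ih v (Function.update V X B) (upd_FF Mk Sk nseed sseed hV hBFF X)).1 hsat
      simp only [upd_comp_S] at this
      exact umem_mono U this (fun k hk => ⟨B k, hBS k, hk⟩)
    · intro hU
      obtain ⟨W, hWFF, hWS, hspec⟩ := exists_skolemS Mk Sk nseed sseed φ X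
        (fun i => (v i).1) V hSe (fun i => (v i).2) hV
      have h1 : {k | Formula.Sat (Mk k) (Sk k) (fun i => (v i).1 k)
          (Function.update (fun i => V i k) X (W k)) φ} ∈ U :=
        umem_mono U hU (fun k hk => hspec k hk)
      have h2 := (ih v (Function.update V X W) (upd_FF Mk Sk nseed sseed hV hWFF X)).2
        (by simp only [upd_comp_S]; exact h1)
      rw [upd_cls] at h2
      exact ⟨clsSet Mk Sk nseed sseed U W, ⟨W, hWFF, hWS, rfl⟩, h2⟩

end los

open Classical Filter

section conseq
variable (Mk : ℕ → L1Struc) (Sk : ∀ k, Set (Set (Mk k).carrier))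
variable (nseed : Set (SeqN Mk)) (sseed : Set (SeqS Mk))
variable (U : Ultrafilter ℕ)

theorem ucongr_set {p q : ℕ → Prop} (h : ∀ k, p k ↔ q k) :
    ({k | p k} ∈ U) ↔ ({k | q k} ∈ U) :=
  umem_congr U (umem_mono U Filter.univ_mem (fun k _ => h k))

theorem ncar_countable (hn : nseed.Countable) (hs : sseed.Countable) :
    Countable (NStruc Mk Sk nseed sseed U).carrier := by
  haveI := (NN_countable Mk Sk nseed sseed hn hs).to_subtype
  exact Function.Surjective.countable
    (f := mkq Mk Sk nseed sseed U) (fun x => mkq_surj Mk Sk nseed sseed U x)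

theorem models2_N {Γ : Set Formula} (hSe : ∀ k, (∅ : Set (Mk k).carrier) ∈ Sk k)
    (hmods : ∀ k, Models2 (Mk k) (Sk k) Γ) :
    Models2 (NStruc Mk Sk nseed sseed U) (SN Mk Sk nseed sseed U) Γ := by
  intro φ hφ v V hV
  choose c hc using fun i => mkq_surj Mk Sk nseed sseed U (v i)
  have hVex : ∀ i, ∃ B, B ∈ FF Mk Sk nseed sseed ∧ (∀ k, B k ∈ Sk k) ∧
      V i = clsSet Mk Sk nseed sseed U B := by
    intro i
    obtain ⟨B, hB1, hB2, hB3⟩ := hV i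
    exact ⟨B, hB1, hB2, hB3⟩
  choose B hBFF hBS hBeq using hVex
  have hveq : v = fun i => mkq Mk Sk nseed sseed U (c i) := funext fun i => (hc i).symm
  have hVeq : V = fun i => clsSet Mk Sk nseed sseed U (B i) := funext fun i => hBeq i
  rw [hveq, hVeq]
  refine (los Mk Sk nseed sseed U hSe φ c B hBFF).2 ?_
  refine umem_mono U Filter.univ_mem (fun k _ => ?_)
  exact hmods k φ hφ _ _ (fun i => hBS i k)

theorem losArith (hSe : ∀ k, (∅ : Set (Mk k).carrier) ∈ Sk k) {φ : Formula}
    (hari : φ.IsArithmetic) (v : ℕ → ↥(NN Mk Sk nseed sseed)) (V : ℕ → SeqS Mk)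
    (hV : ∀ i, V i ∈ FF Mk Sk nseed sseed)
    (D : Set (Set (NStruc Mk Sk nseed sseed U).carrier))
    (Dk : ∀ k, Set (Set (Mk k).carrier)) :
    (Formula.Sat (NStruc Mk Sk nseed sseed U) D
        (fun i => mkq Mk Sk nseed sseed U (v i))
        (fun i => clsSet Mk Sk nseed sseed U (V i)) φ ↔
      {k | Formula.Sat (Mk k) (Dk k) (fun i => (v i).1 k) (fun i => V i k) φ} ∈ U) := by
  rw [Formula.sat_arith (D' := SN Mk Sk nseed sseed U) hari]
  rw [los Mk Sk nseed sseed U hSe φ v V hV]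
  exact ucongr_set U (fun k => Formula.sat_arith hari)

/-- The formula expressing membership in a join. -/
def jf : Formula :=
  .exN 1 (.or (.and (.mem (.var 1) 0) (.eq (.var 0) (.add (.var 1) (.var 1))))
    (.and (.mem (.var 1) 1) (.eq (.var 0) (.add (.add (.var 1) (.var 1)) .one))))

theorem jf_arith : jf.IsArithmetic := ⟨⟨trivial, trivial⟩, ⟨trivial, trivial⟩⟩

theorem sat_jf {M : L1Struc} {D : Set (Set M.carrier)} {v : ℕ → M.carrier}
    {V : ℕ → Set M.carrier} :
    Formula.Sat M D v V jf ↔ v 0 ∈ joinM M (V 0) (V 1) := by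
  have h0 : ∀ a : M.carrier, Function.update v 1 a 0 = v 0 :=
    fun a => Function.update_of_ne (by decide) _ _
  show (∃ a, _) ↔ _
  simp only [Formula.Sat, Term.val, Function.update_self, h0]
  constructor
  · rintro ⟨a, h | h⟩
    · exact Or.inl ⟨a, h.1, h.2⟩
    · exact Or.inr ⟨a, h.1, h.2⟩
  · rintro (⟨a, h1, h2⟩ | ⟨a, h1, h2⟩)
    · exact ⟨a, Or.inl ⟨h1, h2⟩⟩
    · exact ⟨a, Or.inr ⟨h1, h2⟩⟩

theorem sat_jf' {M : L1Struc} {D : Set (Set M.carrier)} {v : ℕ → M.carrier}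
    {V : ℕ → Set M.carrier} {X Y : Set M.carrier} {c : M.carrier}
    (h0 : V 0 = X) (h1 : V 1 = Y) (hc : v 0 = c) :
    Formula.Sat M D v V jf ↔ c ∈ joinM M X Y := by
  subst h0; subst h1; subst hc; exact sat_jf

theorem clsSet_congrU {A B : SeqS Mk} (h : {k | A k = B k} ∈ U) :
    clsSet Mk Sk nseed sseed U A = clsSet Mk Sk nseed sseed U B := by
  ext x
  obtain ⟨c, rfl⟩ := mkq_surj Mk Sk nseed sseed U x
  rw [mem_clsSet, mem_clsSet]
  exact umem_congr U (umem_mono U h (fun k hk => by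
    show c.1 k ∈ A k ↔ c.1 k ∈ B k
    rw [show A k = B k from hk]))

theorem joinM_cls (hSe : ∀ k, (∅ : Set (Mk k).carrier) ∈ Sk k) {A B : SeqS Mk}
    (hA : A ∈ FF Mk Sk nseed sseed) (hB : B ∈ FF Mk Sk nseed sseed) :
    joinM (NStruc Mk Sk nseed sseed U) (clsSet Mk Sk nseed sseed U A)
        (clsSet Mk Sk nseed sseed U B) =
      clsSet Mk Sk nseed sseed U (fun k => joinM (Mk k) (A k) (B k)) := by
  ext x
  obtain ⟨c, rfl⟩ := mkq_surj Mk Sk nseed sseed U x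
  set VV : ℕ → SeqS Mk := fun i => if i = 0 then A else B with hVV
  have hVVmem : ∀ i, VV i ∈ FF Mk Sk nseed sseed := by
    intro i
    rw [hVV]
    dsimp only
    split
    · exact hA
    · exact hB
  have e0 : VV 0 = A := by rw [hVV]; rfl
  have e1 : VV 1 = B := by rw [hVV]; exact if_neg (by decide)
  have h1 : Formula.Sat (NStruc Mk Sk nseed sseed U) (SN Mk Sk nseed sseed U)
      (fun _ => mkq Mk Sk nseed sseed U c)
      (fun i => clsSet Mk Sk nseed sseed U (VV i)) jf ↔
      mkq Mk Sk nseed sseed U c ∈ joinM (NStruc Mk Sk nseed sseed U)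
        (clsSet Mk Sk nseed sseed U A) (clsSet Mk Sk nseed sseed U B) :=
    sat_jf' (by rw [e0]) (by rw [e1]) rfl
  rw [← h1, losArith Mk Sk nseed sseed U hSe jf_arith (fun _ => c) VV hVVmem _
    (fun _ => Set.univ), mem_clsSet]
  refine ucongr_set U (fun k => ?_)
  exact sat_jf' (by rw [e0]) (by rw [e1]) rfl

theorem numMseq_mem (e : ℕ) : (fun k => numM (Mk k) e) ∈ NN Mk Sk nseed sseed := by
  induction e with
  | zero => exact zseq_mem Mk Sk nseed sseed
  | succ e ih => exact addseq_mem Mk Sk nseed sseed ih (oseq_mem Mk Sk nseed sseed)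

theorem numM_mk (e : ℕ) :
    numM (NStruc Mk Sk nseed sseed U) e =
      mkq Mk Sk nseed sseed U ⟨fun k => numM (Mk k) e, numMseq_mem Mk Sk nseed sseed e⟩ := by
  induction e with
  | zero => rfl
  | succ e ih =>
    show (NStruc Mk Sk nseed sseed U).add (numM (NStruc Mk Sk nseed sseed U) e) _ = _
    rw [ih, show (NStruc Mk Sk nseed sseed U).one =
      mkq Mk Sk nseed sseed U ⟨oseq Mk, oseq_mem Mk Sk nseed sseed⟩ from rfl, add_mk]
    rfl

theorem satIdx_mk (hSe : ∀ k, (∅ : Set (Mk k).carrier) ∈ Sk k) {θ : Formula}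
    (hθa : θ.IsArithmetic) (a c : ↥(NN Mk Sk nseed sseed)) {B : SeqS Mk}
    (hB : B ∈ FF Mk Sk nseed sseed) :
    satIdx θ (NStruc Mk Sk nseed sseed U) (mkq Mk Sk nseed sseed U a)
        (mkq Mk Sk nseed sseed U c) (clsSet Mk Sk nseed sseed U B) ↔
      {k | satIdx θ (Mk k) (a.1 k) (c.1 k) (B k)} ∈ U := by
  unfold satIdx
  set vv : ℕ → ↥(NN Mk Sk nseed sseed) := fun m =>
    if m = 0 then a else if m = 1 then c else ⟨zseq Mk, zseq_mem Mk Sk nseed sseed⟩ with hvv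
  have hveq : (fun m => if m = 0 then mkq Mk Sk nseed sseed U a
      else if m = 1 then mkq Mk Sk nseed sseed U c else (NStruc Mk Sk nseed sseed U).zero)
      = fun m => mkq Mk Sk nseed sseed U (vv m) := by
    funext m
    rw [hvv]
    dsimp only
    split
    · rfl
    · split
      · rfl
      · rfl
  rw [hveq]
  rw [losArith Mk Sk nseed sseed U hSe hθa vv (fun _ => B) (fun _ => hB) _ (fun _ => Set.univ)]
  refine ucongr_set U (fun k => ?_)
  have hkeq : (fun m => ((vv m) : SeqN Mk) k) = (fun m =>
      if m = 0 then a.1 k else if m = 1 then c.1 k else (Mk k).zero) := by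
    funext m
    rw [hvv]
    dsimp only
    split
    · rfl
    · split
      · rfl
      · rfl
  rw [hkeq]

end conseq

open Classical Filter

/-- Witness data: a model of `Γ` with a code-following play alive at stage `n₀`. -/
structure Wit (Γ : Set Formula) (θ : Formula) (code : Nat.Partrec.Code)
    (P Q : Pi12Problem) (n₀ : ℕ) where
  M : L1Struc
  S : Set (Set M.carrier)
  f : ℕ → Set M.carrier
  g : ℕ → Prop × Set M.carrier
  cnt : Countable M.carrier
  mod : Models2 M S Γ
  cl : D01Closed M S
  cf : ∀ n, Alive P Q M (CondS M S) f g n → CodeMove θ M code (histL M f n) (g n)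
  al : Alive P Q M (CondS M S) f g n₀

section hard
variable {Γ : Set Formula} {θ : Formula} {code : Nat.Partrec.Code} {P Q : Pi12Problem}

noncomputable def U' : Ultrafilter ℕ := hyperfilter ℕ

theorem hcof (n : ℕ) : {k | n ≤ k} ∈ U' := by
  refine hyperfilter_le_cofinite ?_
  rw [Filter.mem_cofinite]
  have : {k : ℕ | n ≤ k}ᶜ = {k | k < n} := by
    ext k
    simp
  rw [this]
  exact Set.finite_lt_nat n

theorem umem_congr_on {A : Set ℕ} (hA : A ∈ U') {p q : ℕ → Prop}
    (h : ∀ k ∈ A, (p k ↔ q k)) : ({k | p k} ∈ U') ↔ ({k | q k} ∈ U') := by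
  constructor
  · intro hp
    exact umem_mono U' (Filter.inter_mem hA hp) (fun k hk => (h k hk.1).1 hk.2)
  · intro hq
    exact umem_mono U' (Filter.inter_mem hA hq) (fun k hk => (h k hk.1).2 hk.2)

theorem not_mem_of_disjoint {A B : Set ℕ} (hB : B ∈ U') (hdis : ∀ k, k ∈ A → k ∈ B → False) :
    A ∉ U' := by
  intro hA
  obtain ⟨k, hk1, hk2⟩ := Filter.nonempty_of_mem (Filter.inter_mem hA hB)
  exact hdis k hk1 hk2

variable (W : ∀ n : ℕ, Wit Γ θ code P Q n)

@[reducible] def Mk' (W : ∀ n : ℕ, Wit Γ θ code P Q n) : ℕ → L1Struc := fun k => (W k).M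

def Sk' (W : ∀ n : ℕ, Wit Γ θ code P Q n) : ∀ k, Set (Set ((Mk' W) k).carrier) :=
  fun k => (W k).S

theorem hSe' : ∀ k, (∅ : Set ((Mk' W) k).carrier) ∈ (Sk' W) k :=
  fun k => (W k).cl.empty_mem

def fseq (m : ℕ) : SeqS (Mk' W) := fun k => if m ≤ k then (W k).f m else ∅

def gseq (n : ℕ) : SeqS (Mk' W) := fun k => if n < k then ((W k).g n).2 else ∅

def Jseq (n : ℕ) : SeqS (Mk' W) := fun k => joinList ((Mk' W) k) (histL ((Mk' W) k) ((W k).f) n)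

theorem fseq_Sval (m : ℕ) : ∀ k, fseq W m k ∈ (Sk' W) k := by
  intro k
  unfold fseq
  by_cases hk : m ≤ k
  · rw [if_pos hk]
    have hal := alive_of_le (W k).al hk
    exact hal.cond ((W k).f m) (mem_histL.2 ⟨m, le_rfl, rfl⟩)
  · rw [if_neg hk]
    exact hSe' W k

theorem gseq_Sval (n : ℕ) : ∀ k, gseq W n k ∈ (Sk' W) k := by
  intro k
  unfold gseq
  by_cases hk : n < k
  · rw [if_pos hk]
    have hal := alive_of_le (W k).al hk
    have hboard : ((W k).g n).2 ∈ Board ((Mk' W) k) (histL ((Mk' W) k) ((W k).f) n) :=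
      hal.2.2.1
    exact board_subset (W k).cl (fun X hX => (alive_of_le hal (Nat.le_succ n)).cond X hX)
      hboard
  · rw [if_neg hk]
    exact hSe' W k

/-- Extraction of the data of the code moves in the witnesses. -/
theorem hdata (n k : ℕ) : ∃ (e : ℕ) (i j : ((Mk' W) k).carrier), n ≤ k →
    (e ∈ code.eval n ∧
     cantorPairRel ((Mk' W) k) i j (numM ((Mk' W) k) e) ∧
     (∀ m, satIdx θ ((Mk' W) k) i m (Jseq W n k) ↔ ¬ satIdx θ ((Mk' W) k) j m (Jseq W n k)) ∧
     (((W k).g n).1 ↔ satIdx θ ((Mk' W) k) i (((Mk' W) k).zero) (Jseq W n k)) ∧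
     (((W k).g n).2 =
       {a | satIdx θ ((Mk' W) k) i (((Mk' W) k).add a ((Mk' W) k).one) (Jseq W n k)})) := by
  by_cases hk : n ≤ k
  · obtain ⟨e, he, Z, ⟨i, j, hpair, hcompl, hZ⟩, hmv⟩ :=
      (W k).cf n (alive_of_le (W k).al hk)
    rw [histL_length] at he
    simp only [Nat.add_sub_cancel] at he
    refine ⟨e, i, j, fun _ => ⟨he, hpair, hcompl, ?_, ?_⟩⟩
    · have h1 : ((W k).g n).1 = (((Mk' W) k).zero ∈ Z) := congrArg Prod.fst hmv
      rw [h1]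
      exact hZ _
    · have h2 : ((W k).g n).2 = {a | ((Mk' W) k).add a ((Mk' W) k).one ∈ Z} :=
        congrArg Prod.snd hmv
      rw [h2]
      ext a
      exact hZ _
  · exact ⟨0, ((Mk' W) k).zero, ((Mk' W) k).zero, fun h => absurd h hk⟩

noncomputable def eF (n k : ℕ) : ℕ := (hdata W n k).choose

noncomputable def iF (n k : ℕ) : ((Mk' W) k).carrier :=
  (hdata W n k).choose_spec.choose

noncomputable def jF (n k : ℕ) : ((Mk' W) k).carrier :=
  (hdata W n k).choose_spec.choose_spec.choose

theorem hF_spec (n k : ℕ) (hk : n ≤ k) :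
    eF W n k ∈ code.eval n ∧
    cantorPairRel ((Mk' W) k) (iF W n k) (jF W n k) (numM ((Mk' W) k) (eF W n k)) ∧
    (∀ m, satIdx θ ((Mk' W) k) (iF W n k) m (Jseq W n k) ↔
      ¬ satIdx θ ((Mk' W) k) (jF W n k) m (Jseq W n k)) ∧
    (((W k).g n).1 ↔ satIdx θ ((Mk' W) k) (iF W n k) (((Mk' W) k).zero) (Jseq W n k)) ∧
    (((W k).g n).2 = {a | satIdx θ ((Mk' W) k) (iF W n k)
      (((Mk' W) k).add a ((Mk' W) k).one) (Jseq W n k)}) :=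
  (hdata W n k).choose_spec.choose_spec.choose_spec hk

noncomputable def estar (n : ℕ) : ℕ := eF W n n

theorem eF_eq {n k : ℕ} (hk : n ≤ k) : eF W n k = estar W n :=
  Part.mem_unique (hF_spec W n k hk).1 (hF_spec W n n le_rfl).1

noncomputable def nseed' : Set (SeqN (Mk' W)) :=
  (Set.range fun n => (fun k => iF W n k)) ∪ (Set.range fun n => (fun k => jF W n k))

noncomputable def sseed' : Set (SeqS (Mk' W)) :=
  (Set.range (fseq W)) ∪ (Set.range (gseq W)) ∪ (Set.range (Jseq W))

theorem nseed'_cnt : (nseed' W).Countable :=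
  (Set.countable_range _).union (Set.countable_range _)

theorem sseed'_cnt : (sseed' W).Countable :=
  ((Set.countable_range _).union (Set.countable_range _)).union (Set.countable_range _)

theorem fseq_FF (m : ℕ) : fseq W m ∈ FF (Mk' W) (Sk' W) (nseed' W) (sseed' W) :=
  sseed_mem _ _ _ _ (Or.inl (Or.inl ⟨m, rfl⟩))

theorem gseq_FF (n : ℕ) : gseq W n ∈ FF (Mk' W) (Sk' W) (nseed' W) (sseed' W) :=
  sseed_mem _ _ _ _ (Or.inl (Or.inr ⟨n, rfl⟩))

theorem Jseq_FF (n : ℕ) : Jseq W n ∈ FF (Mk' W) (Sk' W) (nseed' W) (sseed' W) :=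
  sseed_mem _ _ _ _ (Or.inr ⟨n, rfl⟩)

theorem iF_NN (n : ℕ) : (fun k => iF W n k) ∈ NN (Mk' W) (Sk' W) (nseed' W) (sseed' W) :=
  nseed_mem _ _ _ _ (Or.inl ⟨n, rfl⟩)

theorem jF_NN (n : ℕ) : (fun k => jF W n k) ∈ NN (Mk' W) (Sk' W) (nseed' W) (sseed' W) :=
  nseed_mem _ _ _ _ (Or.inr ⟨n, rfl⟩)

end hard

open Classical Filter

section hard2
variable {Γ : Set Formula} {θ : Formula} {code : Nat.Partrec.Code} {P Q : Pi12Problem}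
variable (W : ∀ n : ℕ, Wit Γ θ code P Q n)

@[reducible] noncomputable def NStr : L1Struc := NStruc (Mk' W) (Sk' W) (nseed' W) (sseed' W) U'

noncomputable def SNs : Set (Set (NStr W).carrier) :=
  SN (Mk' W) (Sk' W) (nseed' W) (sseed' W) U'

noncomputable def clsS (B : SeqS (Mk' W)) : Set (NStr W).carrier :=
  clsSet (Mk' W) (Sk' W) (nseed' W) (sseed' W) U' B

noncomputable def mkN (c : ↥(NN (Mk' W) (Sk' W) (nseed' W) (sseed' W))) : (NStr W).carrier :=
  mkq (Mk' W) (Sk' W) (nseed' W) (sseed' W) U' c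

noncomputable def fN (m : ℕ) : Set (NStr W).carrier := clsS W (fseq W m)

noncomputable def gN (n : ℕ) : Prop × Set (NStr W).carrier :=
  ({k | n < k ∧ ((W k).g n).1} ∈ U', clsS W (gseq W n))

noncomputable def iT (n : ℕ) : ↥(NN (Mk' W) (Sk' W) (nseed' W) (sseed' W)) :=
  ⟨fun k => iF W n k, iF_NN W n⟩

noncomputable def jT (n : ℕ) : ↥(NN (Mk' W) (Sk' W) (nseed' W) (sseed' W)) :=
  ⟨fun k => jF W n k, jF_NN W n⟩

noncomputable def ZN (n : ℕ) : Set (NStr W).carrier :=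
  {x | satIdx θ (NStr W) (mkN W (iT W n)) x (clsS W (Jseq W n))}

theorem fN_SN (m : ℕ) : fN W m ∈ SNs W :=
  ⟨fseq W m, fseq_FF W m, fseq_Sval W m, rfl⟩

theorem condS_N (n : ℕ) : CondS (NStr W) (SNs W) (histL (NStr W) (fN W) n) := by
  intro X hX
  obtain ⟨j, _, rfl⟩ := mem_histL.1 hX
  exact fN_SN W j

theorem flag_false (n : ℕ) : ¬ (gN W n).1 := by
  show ¬ ({k | n < k ∧ ((W k).g n).1} ∈ U')
  refine not_mem_of_disjoint (hcof (n+1)) ?_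
  intro k hk1 hk2
  have hal : Alive P Q ((Mk' W) k) (CondS ((Mk' W) k) ((Sk' W) k)) ((W k).f) ((W k).g) (n+1) :=
    alive_of_le (W k).al hk2
  exact hal.2.1 hk1.2

theorem Jcls (n : ℕ) : joinList (NStr W) (histL (NStr W) (fN W) n) = clsS W (Jseq W n) := by
  induction n with
  | zero =>
    show joinList (NStr W) (histL (NStr W) (fN W) 0) = _
    have h1 : histL (NStr W) (fN W) 0 = [fN W 0] := by
      simp [histL, List.range_succ]
    rw [h1]
    show fN W 0 = clsS W (Jseq W 0)
    refine clsSet_congrU _ _ _ _ _ (umem_mono U' Filter.univ_mem (fun k _ => ?_))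
    show fseq W 0 k = Jseq W 0 k
    unfold fseq Jseq
    rw [if_pos (Nat.zero_le k)]
    have h2 : histL ((Mk' W) k) ((W k).f) 0 = [(W k).f 0] := by
      simp [histL, List.range_succ]
    rw [h2]
    rfl
  | succ n ih =>
    rw [joinList_histL_succ, ih]
    unfold fN clsS NStr
    rw [joinM_cls (Mk' W) (Sk' W) (nseed' W) (sseed' W) U' (hSe' W) (Jseq_FF W n)
      (fseq_FF W (n+1))]
    refine clsSet_congrU _ _ _ _ _ (umem_mono U' (hcof (n+1)) (fun k hk => ?_))
    show joinM ((Mk' W) k) (Jseq W n k) (fseq W (n+1) k) = Jseq W (n+1) k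
    unfold fseq Jseq
    rw [if_pos (hk : n + 1 ≤ k)]
    rw [joinList_histL_succ]

/-- The Cantor-pairing formula. -/
def cpf : Formula :=
  .eq (.add (.var 2) (.var 2))
    (.add (.add (.mul (.add (.var 0) (.var 1)) (.add (.var 0) (.var 1)))
      (.add (.var 0) (.var 1))) (.add (.var 0) (.var 0)))

theorem sat_cpf {M : L1Struc} {D : Set (Set M.carrier)} {v : ℕ → M.carrier}
    {V : ℕ → Set M.carrier} :
    Formula.Sat M D v V cpf ↔ cantorPairRel M (v 0) (v 1) (v 2) := Iff.rfl

theorem cpf_arith : cpf.IsArithmetic := trivial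

theorem pairing_N (n : ℕ) :
    cantorPairRel (NStr W) (mkN W (iT W n)) (mkN W (jT W n))
      (numM (NStr W) (estar W n)) := by
  set numT : ↥(NN (Mk' W) (Sk' W) (nseed' W) (sseed' W)) :=
    ⟨fun k => numM ((Mk' W) k) (estar W n),
      numMseq_mem (Mk' W) (Sk' W) (nseed' W) (sseed' W) (estar W n)⟩ with hnumT
  set vv : ℕ → ↥(NN (Mk' W) (Sk' W) (nseed' W) (sseed' W)) :=
    fun m => if m = 0 then iT W n else if m = 1 then jT W n else numT with hvv
  have hveq : (fun m : ℕ => if m = 0 then mkN W (iT W n) else if m = 1 then mkN W (jT W n)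
      else numM (NStr W) (estar W n)) = fun m => mkN W (vv m) := by
    funext m
    rw [hvv]
    dsimp only
    split
    · rfl
    · split
      · rfl
      · exact numM_mk (Mk' W) (Sk' W) (nseed' W) (sseed' W) U' (estar W n)
  have h1 : Formula.Sat (NStr W) (SNs W) (fun m => mkN W (vv m))
      (fun _ => clsS W (Jseq W n)) cpf := by
    unfold mkN clsS NStr
    rw [losArith (Mk' W) (Sk' W) (nseed' W) (sseed' W) U' (hSe' W) cpf_arith vv
      (fun _ => Jseq W n) (fun _ => Jseq_FF W n) _ (fun _ => Set.univ)]
    refine umem_mono U' (hcof n) (fun k hk => ?_)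
    have hsp := (hF_spec W n k hk).2.1
    rw [eF_eq W hk] at hsp
    exact hsp
  rw [← hveq] at h1
  exact sat_cpf.1 h1

theorem mem_ZN (hθa : θ.IsArithmetic) (n : ℕ) (c : ↥(NN (Mk' W) (Sk' W) (nseed' W) (sseed' W))) :
    mkN W c ∈ ZN W n ↔ {k | satIdx θ ((Mk' W) k) (iF W n k) (c.1 k) (Jseq W n k)} ∈ U' := by
  show satIdx θ (NStr W) (mkN W (iT W n)) (mkN W c) (clsS W (Jseq W n)) ↔ _
  unfold mkN clsS NStr
  exact satIdx_mk (Mk' W) (Sk' W) (nseed' W) (sseed' W) U' (hSe' W)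
    hθa (iT W n) c (Jseq_FF W n)

end hard2

open Classical Filter

section hard3
variable {Γ : Set Formula} {θ : Formula} {code : Nat.Partrec.Code} {P Q : Pi12Problem}
variable (W : ∀ n : ℕ, Wit Γ θ code P Q n)

theorem satIdx_N (hθa : θ.IsArithmetic) (n : ℕ)
    (d c : ↥(NN (Mk' W) (Sk' W) (nseed' W) (sseed' W))) :
    satIdx θ (NStr W) (mkN W d) (mkN W c) (clsS W (Jseq W n)) ↔
      {k | satIdx θ ((Mk' W) k) (d.1 k) (c.1 k) (Jseq W n k)} ∈ U' := by
  unfold mkN clsS NStr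
  exact satIdx_mk (Mk' W) (Sk' W) (nseed' W) (sseed' W) U' (hSe' W) hθa d c (Jseq_FF W n)

theorem flag_eq (hθa : θ.IsArithmetic) (n : ℕ) :
    (gN W n).1 = ((NStr W).zero ∈ ZN W n) := by
  apply propext
  show ({k | n < k ∧ ((W k).g n).1} ∈ U') ↔ _
  have h1 : ({k | n < k ∧ ((W k).g n).1} ∈ U') ↔ ({k | ((W k).g n).1} ∈ U') :=
    umem_congr_on (hcof (n+1)) (fun k hk => ⟨fun h => h.2, fun h => ⟨hk, h⟩⟩)
  have h2 : ({k | ((W k).g n).1} ∈ U') ↔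
      ({k | satIdx θ ((Mk' W) k) (iF W n k) (((Mk' W) k).zero) (Jseq W n k)} ∈ U') :=
    umem_congr_on (hcof n) (fun k hk => (hF_spec W n k hk).2.2.2.1)
  rw [h1, h2]
  exact (mem_ZN W hθa n ⟨zseq (Mk' W), zseq_mem (Mk' W) (Sk' W) (nseed' W) (sseed' W)⟩).symm

theorem payload_eq (hθa : θ.IsArithmetic) (n : ℕ) :
    (gN W n).2 = {a | (NStr W).add a (NStr W).one ∈ ZN W n} := by
  ext x
  obtain ⟨c, hc⟩ := mkq_surj (Mk' W) (Sk' W) (nseed' W) (sseed' W) U' x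
  rw [← hc]
  have hadd : (NStr W).add (mkN W c) (NStr W).one =
      mkN W ⟨addseq (Mk' W) c.1 (oseq (Mk' W)),
        addseq_mem (Mk' W) (Sk' W) (nseed' W) (sseed' W) c.2
          (oseq_mem (Mk' W) (Sk' W) (nseed' W) (sseed' W))⟩ := by
    unfold mkN NStr
    rw [show (NStruc (Mk' W) (Sk' W) (nseed' W) (sseed' W) U').one =
      mkq (Mk' W) (Sk' W) (nseed' W) (sseed' W) U'
        ⟨oseq (Mk' W), oseq_mem (Mk' W) (Sk' W) (nseed' W) (sseed' W)⟩ from rfl, add_mk]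
  show mkN W c ∈ (gN W n).2 ↔ mkN W c ∈ {a | (NStr W).add a (NStr W).one ∈ ZN W n}
  have hR : (mkN W c ∈ {a | (NStr W).add a (NStr W).one ∈ ZN W n}) ↔
      ({k | satIdx θ ((Mk' W) k) (iF W n k)
        (((Mk' W) k).add (c.1 k) ((Mk' W) k).one) (Jseq W n k)} ∈ U') := by
    show ((NStr W).add (mkN W c) (NStr W).one ∈ ZN W n) ↔ _
    rw [hadd]
    exact mem_ZN W hθa n _
  rw [hR]
  show ({k | c.1 k ∈ gseq W n k} ∈ U') ↔ _
  refine umem_congr_on (hcof (n+1)) (fun k hk => ?_)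
  have e1 : gseq W n k = ((W k).g n).2 := if_pos (hk : n + 1 ≤ k)
  have e2 := (hF_spec W n k (Nat.le_of_succ_le hk)).2.2.2.2
  rw [e1, e2]
  exact Iff.rfl

theorem codeMove_N (hθa : θ.IsArithmetic) (n : ℕ) :
    CodeMove θ (NStr W) code (histL (NStr W) (fN W) n) (gN W n) := by
  refine ⟨estar W n, ?_, ZN W n, ?_, ?_⟩
  · rw [histL_length]
    simpa [estar] using (hF_spec W n n le_rfl).1
  · rw [Jcls W n]
    refine ⟨mkN W (iT W n), mkN W (jT W n), pairing_N W n, ?_, fun x => Iff.rfl⟩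
    intro x
    obtain ⟨c, hc⟩ := mkq_surj (Mk' W) (Sk' W) (nseed' W) (sseed' W) U' x
    rw [← hc]
    show satIdx θ (NStr W) (mkN W (iT W n)) (mkN W c) (clsS W (Jseq W n)) ↔
      ¬ satIdx θ (NStr W) (mkN W (jT W n)) (mkN W c) (clsS W (Jseq W n))
    rw [satIdx_N W hθa n (iT W n) c, satIdx_N W hθa n (jT W n) c]
    rw [← unot U']
    refine umem_congr_on (hcof n) (fun k hk => ?_)
    exact (hF_spec W n k hk).2.2.1 (c.1 k)
  · exact Prod.ext (flag_eq W hθa n) (payload_eq W hθa n)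

theorem PInst_N (hPa : P.theta.IsArithmetic) : P.Inst (NStr W) (fN W 0) := by
  show Formula.Sat (NStr W) Set.univ (fun _ => (NStr W).zero) (fun _ => fN W 0) P.theta
  have hz : (NStr W).zero = mkN W ⟨zseq (Mk' W),
      zseq_mem (Mk' W) (Sk' W) (nseed' W) (sseed' W)⟩ := rfl
  rw [hz]
  show Formula.Sat (NStruc (Mk' W) (Sk' W) (nseed' W) (sseed' W) U') Set.univ
    (fun _ => mkq (Mk' W) (Sk' W) (nseed' W) (sseed' W) U'
      ⟨zseq (Mk' W), zseq_mem (Mk' W) (Sk' W) (nseed' W) (sseed' W)⟩)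
    (fun _ => clsSet (Mk' W) (Sk' W) (nseed' W) (sseed' W) U' (fseq W 0)) P.theta
  rw [losArith (Mk' W) (Sk' W) (nseed' W) (sseed' W) U' (hSe' W) hPa
    (fun _ => ⟨zseq (Mk' W), zseq_mem (Mk' W) (Sk' W) (nseed' W) (sseed' W)⟩)
    (fun _ => fseq W 0) (fun _ => fseq_FF W 0) Set.univ (fun _ => Set.univ)]
  refine umem_mono U' Filter.univ_mem (fun k _ => ?_)
  show Formula.Sat ((Mk' W) k) Set.univ _ _ P.theta
  rw [show fseq W 0 k = (W k).f 0 from if_pos (Nat.zero_le k)]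
  exact (alive_of_le (W k).al (Nat.zero_le k)).1

theorem QSol_N (hQa : Q.psi.IsArithmetic) (m : ℕ) :
    Q.Sol (NStr W) (gN W m).2 (fN W (m+1)) := by
  show Formula.Sat (NStr W) Set.univ (fun _ => (NStr W).zero)
    (fun i => if i = 0 then (gN W m).2 else fN W (m+1)) Q.psi
  set VV : ℕ → SeqS (Mk' W) := fun i => if i = 0 then gseq W m else fseq W (m+1) with hVV
  have hVVFF : ∀ i, VV i ∈ FF (Mk' W) (Sk' W) (nseed' W) (sseed' W) := by
    intro i
    rw [hVV]
    dsimp only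
    split
    · exact gseq_FF W m
    · exact fseq_FF W (m+1)
  have hVeq : (fun i : ℕ => if i = 0 then (gN W m).2 else fN W (m+1)) =
      (fun i => clsSet (Mk' W) (Sk' W) (nseed' W) (sseed' W) U' (VV i)) := by
    funext i
    rw [hVV]
    dsimp only
    split
    · rfl
    · rfl
  rw [hVeq]
  show Formula.Sat (NStruc (Mk' W) (Sk' W) (nseed' W) (sseed' W) U') Set.univ
    (fun _ => mkq (Mk' W) (Sk' W) (nseed' W) (sseed' W) U'
      ⟨zseq (Mk' W), zseq_mem (Mk' W) (Sk' W) (nseed' W) (sseed' W)⟩)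
    (fun i => clsSet (Mk' W) (Sk' W) (nseed' W) (sseed' W) U' (VV i)) Q.psi
  rw [losArith (Mk' W) (Sk' W) (nseed' W) (sseed' W) U' (hSe' W) hQa
    (fun _ => ⟨zseq (Mk' W), zseq_mem (Mk' W) (Sk' W) (nseed' W) (sseed' W)⟩)
    VV hVVFF Set.univ (fun _ => Set.univ)]
  refine umem_mono U' (hcof (m+1)) (fun k hk => ?_)
  have e1 : gseq W m k = ((W k).g m).2 := if_pos (hk : m + 1 ≤ k)
  have e2 : fseq W (m+1) k = (W k).f (m+1) := if_pos hk
  have hVk : (fun i => VV i k) =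
      (fun i : ℕ => if i = 0 then ((W k).g m).2 else (W k).f (m+1)) := by
    funext i
    rw [hVV]
    dsimp only
    split
    · exact e1
    · exact e2
  show Formula.Sat ((Mk' W) k) Set.univ _ (fun i => VV i k) Q.psi
  rw [hVk]
  exact (alive_of_le (W k).al hk).2.2.2.2.1

theorem models_N : Models2 (NStr W) (SNs W) Γ := by
  unfold NStr SNs
  exact models2_N (Mk' W) (Sk' W) (nseed' W) (sseed' W) U' (hSe' W) (fun k => (W k).mod)

theorem SNs_ne : (SNs W).Nonempty :=
  ⟨clsS W (eseq (Mk' W)), eseq (Mk' W), eseq_mem (Mk' W) (Sk' W) (nseed' W) (sseed' W),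
    fun k => hSe' W k, rfl⟩

theorem cnt_N : Countable (NStr W).carrier := by
  unfold NStr
  exact ncar_countable (Mk' W) (Sk' W) (nseed' W) (sseed' W) U' (nseed'_cnt W) (sseed'_cnt W)

end hard3

/-- The hard implication: a computable winning strategy for `Ĝ` wins within some fixed
number of moves. -/
theorem hat_to_hatwithin {Γ : Set Formula} {θ : Formula} {P Q : Pi12Problem}
    (hExt : Delta01CA ⊆ Γ) (hθa : θ.IsArithmetic)
    (hPa : P.theta.IsArithmetic) (hQa : Q.psi.IsArithmetic) :
    P2CompWinsHat Γ θ P Q → ∃ n₀, P2CompWinsHatWithin Γ θ P Q n₀ := by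
  rintro ⟨code, hcode⟩
  by_contra hno
  have hW : ∀ n₀ : ℕ, Nonempty (Wit Γ θ code P Q n₀) := by
    intro n₀
    have h1 : ¬ P2CompWinsHatWithin Γ θ P Q n₀ := fun h => hno ⟨n₀, h⟩
    have h2 : ¬ (∀ (M : L1Struc) (S : Set (Set M.carrier)), Countable M.carrier →
        Models2 M S Γ → D01Closed M S → P2CompWinsCWithin θ code P Q M (CondS M S) n₀) :=
      fun h => h1 ⟨code, h⟩
    push_neg at h2
    obtain ⟨M, S, hcnt, hmod, hcl, hnw⟩ := h2
    rw [P2CompWinsCWithin] at hnw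
    push_neg at hnw
    obtain ⟨f, g, hfg⟩ := hnw
    have hplain := hcode M S hcnt hmod hcl f g
    obtain ⟨hcf, hnrw⟩ := hfg hplain.1
    have hrun := hplain.2 hcf
    have hal : Alive P Q M (CondS M S) f g n₀ := by
      by_contra hna
      exact hnrw ⟨hrun.1, hna⟩
    exact ⟨⟨M, S, f, g, hcnt, hmod, hcl, hcf, hal⟩⟩
  have W : ∀ n : ℕ, Wit Γ θ code P Q n := fun n => (hW n).some
  have hd01 : D01Closed (NStr W) (SNs W) :=
    d01closed_of_models (models_N W) hExt (SNs_ne W)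
  have hgame := hcode (NStr W) (SNs W) (cnt_N W) (models_N W) hd01 (fN W) (gN W)
  have hcfN : ∀ n, Alive P Q (NStr W) (CondS (NStr W) (SNs W)) (fN W) (gN W) n →
      CodeMove θ (NStr W) code (histL (NStr W) (fN W) n) (gN W n) :=
    fun n _ => codeMove_N W hθa n
  have hrun := hgame.2 hcfN
  have hall : ∀ m, Alive P Q (NStr W) (CondS (NStr W) (SNs W)) (fN W) (gN W) m := by
    intro m
    induction m with
    | zero => exact ⟨PInst_N W hPa, condS_N W 0⟩
    | succ m ih =>
      rcases hrun.1 m ih with hcont | hwin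
      · exact ⟨ih, flag_false W m, hcont.2.1, hcont.2.2, QSol_N W hQa m, condS_N W (m+1)⟩
      · exact absurd hwin.1 (flag_false W m)
  exact hrun.2 hall

end SOA

namespace SOA

/-- Let `Γ` be a consistent extension of Δ⁰₁-comprehension that proves the existence of a
universal Σ⁰₁ formula `θ`, and let `P`, `Q` be Π¹₂-problems. The following are equivalent:
(1) Player 2 has a computable winning strategy for `G^Γ(Q → P)`;
(2) Player 2 has a computable winning strategy for `Ĝ^Γ(Q → P)`;
(3) there is an `n` such that Player 2 has a computable strategy for `G^Γ(Q → P)` ensuring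
victory in at most `n` moves;
(4) there is an `n` such that Player 2 has a computable strategy for `Ĝ^Γ(Q → P)` ensuring
victory in at most `n` moves.
Furthermore, `n` witnesses (3) iff it witnesses (4). -/
theorem statement9 (Γ : Set Formula) (hCons : SemConsistent Γ) (hExt : Delta01CA ⊆ Γ)
    (θ : Formula) (hθ : UnivSigma01 Γ θ)
    (P Q : Pi12Problem) (hP : P.WellFormed) (hQ : Q.WellFormed) :
    (P2CompWinsG Γ θ P Q ↔ P2CompWinsHat Γ θ P Q) ∧
    (P2CompWinsG Γ θ P Q ↔ ∃ n : ℕ, P2CompWinsGWithin Γ θ P Q n) ∧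
    (P2CompWinsG Γ θ P Q ↔ ∃ n : ℕ, P2CompWinsHatWithin Γ θ P Q n) ∧
    (∀ n : ℕ, P2CompWinsGWithin Γ θ P Q n ↔ P2CompWinsHatWithin Γ θ P Q n) := by
  have hθa : θ.IsArithmetic := hθ.1.1.arith
  have hPa : P.theta.IsArithmetic := hP.1
  have hQa : Q.psi.IsArithmetic := hQ.2.1
  have h12 : P2CompWinsG Γ θ P Q → P2CompWinsHat Γ θ P Q := soft_G_to_Hat hExt
  have h24 : P2CompWinsHat Γ θ P Q → ∃ n, P2CompWinsHatWithin Γ θ P Q n :=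
    hat_to_hatwithin hExt hθa hPa hQa
  have h43 : ∀ n, P2CompWinsHatWithin Γ θ P Q n → P2CompWinsGWithin Γ θ P Q n :=
    fun n => soft_HatW_to_GW hExt
  have h34 : ∀ n, P2CompWinsGWithin Γ θ P Q n → P2CompWinsHatWithin Γ θ P Q n :=
    fun n => soft_GW_to_HatW hExt
  have h31 : ∀ n, P2CompWinsGWithin Γ θ P Q n → P2CompWinsG Γ θ P Q :=
    fun n => soft_GW_to_G
  refine ⟨⟨h12, fun h2 => ?_⟩, ⟨fun h1 => ?_, fun h3 => ?_⟩, ⟨fun h1 => ?_, fun h4 => ?_⟩,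
    fun n => ⟨h34 n, h43 n⟩⟩
  · obtain ⟨n, h4⟩ := h24 h2
    exact h31 n (h43 n h4)
  · obtain ⟨n, h4⟩ := h24 (h12 h1)
    exact ⟨n, h43 n h4⟩
  · obtain ⟨n, h3'⟩ := h3
    exact h31 n h3'
  · exact h24 (h12 h1)
  · obtain ⟨n, h4⟩ := h4
    exact h31 n (h43 n h4)

end SOA
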